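/- arXiv:1302.6562 — 11 statements merged into one kernel-verified Lean document; each statement's English description precedes it below -/
import Mathlib

section
/- Let l, m, n be natural numbers with l < m and l < n, and let x be a q-ary string of length m and y a q-ary string of length n. Then there exists a q-ary string z of length l that is a subsequence of both x and y if and only if there exists a q-ary string w of length m + n - l such that both x and y are subsequences of w. -/
/-- From a common supersequence, extract a common subsequence with
`|x| + |y| ≤ |w| + |z|`. -/
lemma common_sub_of_super {α : Type*} :
    ∀ w x y : List α, x.Sublist w → y.Sublist w →
      ∃ z : List α, z.Sublist x ∧ z.Sublist y ∧
        x.length + y.length ≤ w.length + z.length := by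
  intro w
  induction w with
  | nil =>
    intro x y hx hy
    simp_all
  | cons a w ih =>
    intro x y hx hy
    cases hx with
    | cons _ hx' =>
      cases hy with
      | cons _ hy' =>
        obtain ⟨z, h1, h2, h3⟩ := ih x y hx' hy'
        exact ⟨z, h1, h2, by simpa using h3.trans (by omega)⟩
      | cons_cons _ hy' =>
        obtain ⟨z, h1, h2, h3⟩ := ih x _ hx' hy'
        exact ⟨z, h1, h2.cons a, by simp at h3 ⊢; omega⟩
    | cons_cons _ hx' =>
      cases hy with
      | cons _ hy' =>
        obtain ⟨z, h1, h2, h3⟩ := ih _ y hx' hy'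
        exact ⟨z, h1.cons a, h2, by simp at h3 ⊢; omega⟩
      | cons_cons _ hy' =>
        obtain ⟨z, h1, h2, h3⟩ := ih _ _ hx' hy'
        exact ⟨a :: z, h1.cons₂ a, h2.cons₂ a, by simp at h3 ⊢; omega⟩

/-- From a common subsequence, merge into a common supersequence with
`|w| + |z| = |x| + |y|`. -/
lemma common_super_of_sub {α : Type*} :
    ∀ (N : ℕ) (x y z : List α), x.length + y.length ≤ N → z.Sublist x → z.Sublist y →
      ∃ w : List α, x.Sublist w ∧ y.Sublist w ∧
        w.length + z.length = x.length + y.length := by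
  intro N
  induction N with
  | zero =>
    intro x y z hN hx hy
    have : x = [] := by cases x <;> simp_all
    subst this
    have : z = [] := List.sublist_nil.mp hx
    subst this
    exact ⟨y, by simpa using hy.length_le.antisymm (by simpa using hN) ▸ (List.nil_sublist y),
           List.Sublist.refl y, by simp⟩
  | succ N ih =>
    intro x y z hN hx hy
    cases x with
    | nil =>
      have : z = [] := List.sublist_nil.mp hx
      subst this
      exact ⟨y, List.nil_sublist y, List.Sublist.refl y, by simp⟩
    | cons a x' =>
      cases hx with
      | cons _ hx' =>
        obtain ⟨w, h1, h2, h3⟩ := ih x' y z (by simp at hN; omega) hx' hy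
        exact ⟨a :: w, h1.cons₂ a, h2.cons a, by simp at h3 ⊢; omega⟩
      | cons_cons _ hx' =>
        cases y with
        | nil => exact absurd hy (by simp)
        | cons b y' =>
          cases hy with
          | cons _ hy' =>
            obtain ⟨w, h1, h2, h3⟩ := ih (a :: x') y' _ (by simp at hN ⊢; omega)
              (hx'.cons₂ a) hy'
            exact ⟨b :: w, h1.cons b, h2.cons₂ b, by simp at h3 ⊢; omega⟩
          | cons_cons _ hy' =>
            obtain ⟨w, h1, h2, h3⟩ := ih x' y' _ (by simp at hN; omega) hx' hy'
            exact ⟨a :: w, h1.cons₂ a, h2.cons₂ a, by simp at h3 ⊢; omega⟩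

/-- For q-ary strings x of length m and y of length n with l < m and l < n,
there is a common subsequence z of length l iff there is a common supersequence w of
length m + n - l. -/
theorem stmt_0 (q l m n : ℕ) (hq : 2 ≤ q) (hlm : l < m) (hln : l < n)
    (x y : List (Fin q)) (hx : x.length = m) (hy : y.length = n) :
    (∃ z : List (Fin q), z.length = l ∧ z.Sublist x ∧ z.Sublist y) ↔
      (∃ w : List (Fin q), w.length = m + n - l ∧ x.Sublist w ∧ y.Sublist w) := by
  constructor
  · rintro ⟨z, hzl, hzx, hzy⟩
    obtain ⟨w, h1, h2, h3⟩ := common_super_of_sub (x.length + y.length) x y z le_rfl hzx hzy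
    exact ⟨w, by omega, h1, h2⟩
  · rintro ⟨w, hwl, hxw, hyw⟩
    obtain ⟨z, h1, h2, h3⟩ := common_sub_of_super w x y hxw hyw
    have hl : l ≤ z.length := by omega
    exact ⟨z.take l, by simp [hl], (z.take_sublist l).trans h1, (z.take_sublist l).trans h2⟩
end

section
/- Let a, b, n be natural numbers with a + b ≤ n, and let x and y be q-ary strings of length n. Then D_{a+b}(x) ∩ D_{a+b}(y) = ∅ if and only if S_{a,b}(x) ∩ S_{a,b}(y) = ∅. -/
/-- `delSet q n s x` is D_s(x): the set of q-ary strings of length `n - s`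
that are subsequences of `x`. -/
def delSet (q n s : ℕ) (x : List (Fin q)) : Set (List (Fin q)) :=
  {z | z.length = n - s ∧ z.Sublist x}

/-- `sSet q n a b x` is S_{a,b}(x): the set of q-ary strings `w` of length `n - a + b`
such that some q-ary string of length `n - a` is a subsequence of both `x` and `w`. -/
def sSet (q n a b : ℕ) (x : List (Fin q)) : Set (List (Fin q)) :=
  {w | w.length = n - a + b ∧ ∃ z : List (Fin q), z.length = n - a ∧ z.Sublist x ∧ z.Sublist w}

/-- Any sublist can be extended to a sublist of any intermediate length. -/
lemma sublist_extend {α : Type*} (x : List α) : ∀ (z : List α) (m : ℕ),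
    z.Sublist x → z.length ≤ m → m ≤ x.length →
    ∃ z' : List α, z'.length = m ∧ z.Sublist z' ∧ z'.Sublist x := by
  induction x with
  | nil =>
    intro z m hz hzm hmx
    simp at hmx
    subst hmx
    exact ⟨z, Nat.le_zero.mp hzm, List.Sublist.refl z, hz⟩
  | cons c xs ih =>
    intro z m hz hzm hmx
    rcases eq_or_lt_of_le hzm with h | h
    · exact ⟨z, h, List.Sublist.refl z, hz⟩
    · rcases List.sublist_cons_iff.mp hz with hz' | ⟨r, rfl, hr⟩
      · by_cases hm : m ≤ xs.length
        · obtain ⟨t, ht1, ht2, ht3⟩ := ih z m hz' hzm hm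
          exact ⟨t, ht1, ht2, ht3.trans (List.sublist_cons_self c xs)⟩
        · have hm' : m - 1 ≤ xs.length := by simp at hmx; omega
          obtain ⟨t, ht1, ht2, ht3⟩ := ih z (m - 1) hz' (by omega) hm'
          exact ⟨c :: t, by simp [ht1]; omega,
            ht2.trans (List.sublist_cons_self c t), ht3.cons_cons c⟩
      · have hm' : m - 1 ≤ xs.length := by simp at hmx; omega
        obtain ⟨t, ht1, ht2, ht3⟩ := ih r (m - 1) hr (by simp at hzm ⊢; omega) hm'
        exact ⟨c :: t, by simp [ht1]; simp at hmx; omega, ht2.cons_cons c, ht3.cons_cons c⟩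

/-- Two sublists of `w` have a common sublist of length ≥ |u| + |v| - |w|. -/
lemma common_sublist {α : Type*} (w : List α) : ∀ (u v : List α),
    u.Sublist w → v.Sublist w →
    ∃ t : List α, t.Sublist u ∧ t.Sublist v ∧
      u.length + v.length ≤ w.length + t.length := by
  induction w with
  | nil =>
    intro u v hu hv
    simp at hu hv
    exact ⟨[], by simp [hu, hv]⟩
  | cons c ws ih =>
    intro u v hu hv
    rcases List.sublist_cons_iff.mp hu with hu' | ⟨u', rfl, hu'⟩
    · rcases List.sublist_cons_iff.mp hv with hv' | ⟨v', rfl, hv'⟩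
      · obtain ⟨t, h1, h2, h3⟩ := ih u v hu' hv'
        exact ⟨t, h1, h2, by simp; omega⟩
      · obtain ⟨t, h1, h2, h3⟩ := ih u v' hu' hv'
        exact ⟨t, h1, h2.trans (List.sublist_cons_self c v'), by simp; omega⟩
    · rcases List.sublist_cons_iff.mp hv with hv' | ⟨v', rfl, hv'⟩
      · obtain ⟨t, h1, h2, h3⟩ := ih u' v hu' hv'
        exact ⟨t, h1.trans (List.sublist_cons_self c u'), h2, by simp; omega⟩
      · obtain ⟨t, h1, h2, h3⟩ := ih u' v' hu' hv'
        exact ⟨c :: t, h1.cons_cons c, h2.cons_cons c, by simp; omega⟩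

/-- Two supersequences of `z` have a common supersequence of length |u| + |v| - |z|. -/
lemma common_supersequence {α : Type*} : ∀ (u v z : List α),
    z.Sublist u → z.Sublist v →
    ∃ w : List α, u.Sublist w ∧ v.Sublist w ∧
      w.length + z.length = u.length + v.length := by
  intro u
  induction u with
  | nil =>
    intro v z hzu hzv
    simp at hzu
    subst hzu
    exact ⟨v, by simp⟩
  | cons c u' ihu =>
    intro v
    induction v with
    | nil =>
      intro z hzu hzv
      simp at hzv
      subst hzv
      exact ⟨c :: u', by simp⟩
    | cons e v' ihv =>
      intro z hzu hzv
      rcases List.sublist_cons_iff.mp hzv with hzv' | ⟨z', rfl, hz'v'⟩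
      · obtain ⟨w, h1, h2, h3⟩ := ihv z hzu hzv'
        exact ⟨e :: w, h1.trans (List.sublist_cons_self e w), h2.cons_cons e,
          by simp at h3 ⊢; omega⟩
      · rcases List.sublist_cons_iff.mp hzu with hzu' | ⟨z'', hz, hz''u'⟩
        · obtain ⟨w, h1, h2, h3⟩ := ihu (e :: v') (e :: z') hzu' hzv
          exact ⟨c :: w, h1.cons_cons c, h2.trans (List.sublist_cons_self c w),
            by simp at h3 ⊢; omega⟩
        · rw [List.cons.injEq] at hz
          obtain ⟨he, hzz⟩ := hz
          obtain ⟨w, h1, h2, h3⟩ := ihu v' z' (hzz ▸ hz''u') hz'v'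
          exact ⟨c :: w, h1.cons_cons c, by rw [he]; exact h2.cons_cons c,
            by simp at h3 ⊢; omega⟩

/-- For a + b ≤ n and q-ary strings x, y of length n,
D_{a+b}(x) ∩ D_{a+b}(y) = ∅ iff S_{a,b}(x) ∩ S_{a,b}(y) = ∅. -/
theorem stmt_1 (q a b n : ℕ) (hq : 2 ≤ q) (hab : a + b ≤ n)
    (x y : List (Fin q)) (hx : x.length = n) (hy : y.length = n) :
    delSet q n (a + b) x ∩ delSet q n (a + b) y = ∅ ↔
      sSet q n a b x ∩ sSet q n a b y = ∅ := by
  rw [← Set.not_nonempty_iff_eq_empty, ← Set.not_nonempty_iff_eq_empty, not_iff_not]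
  constructor
  · rintro ⟨z, ⟨hzl, hzx⟩, ⟨_, hzy⟩⟩
    obtain ⟨zx, hzx1, hzx2, hzx3⟩ := sublist_extend x z (n - a) hzx
      (by omega) (by omega)
    obtain ⟨zy, hzy1, hzy2, hzy3⟩ := sublist_extend y z (n - a) hzy
      (by omega) (by omega)
    obtain ⟨w, hw1, hw2, hw3⟩ := common_supersequence zx zy z hzx2 hzy2
    have hwl : w.length = n - a + b := by omega
    exact ⟨w, ⟨hwl, zx, hzx1, hzx3, hw1⟩, ⟨hwl, zy, hzy1, hzy3, hw2⟩⟩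
  · rintro ⟨w, ⟨hwl, zx, hzx1, hzx2, hzx3⟩, ⟨_, zy, hzy1, hzy2, hzy3⟩⟩
    obtain ⟨t, ht1, ht2, ht3⟩ := common_sublist w zx zy hzx3 hzy3
    refine ⟨t.take (n - (a + b)), ⟨?_, (List.take_sublist _ t).trans ((ht1).trans hzx2)⟩,
      ⟨?_, (List.take_sublist _ t).trans ((ht2).trans hzy2)⟩⟩ <;>
      simp <;> omega
end

section
/- Let a, b, n be natural numbers with a + b ≤ n and let C be a set of q-ary strings of length n. Then C is an (a+b)-deletion correcting code if and only if C is an a-deletion b-insertion correcting code. In particular, every (a+b)-deletion correcting code is an a-deletion b-insertion correcting code. -/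
lemma common_sub {α : Type*} : ∀ (w s t : List α), s.Sublist w → t.Sublist w →
    ∃ u : List α, u.Sublist s ∧ u.Sublist t ∧ s.length + t.length ≤ w.length + u.length := by
  intro w
  induction w with
  | nil =>
    intro s t hs ht
    obtain rfl := List.sublist_nil.mp hs
    obtain rfl := List.sublist_nil.mp ht
    exact ⟨[], .refl _, .refl _, by simp⟩
  | cons c w' ih =>
    intro s t hs ht
    cases hs with
    | cons _ hs' =>
      cases ht with
      | cons _ ht' =>
        obtain ⟨u, h1, h2, h3⟩ := ih s t hs' ht'
        exact ⟨u, h1, h2, by simp; omega⟩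
      | cons_cons _ ht' =>
        obtain ⟨u, h1, h2, h3⟩ := ih s _ hs' ht'
        exact ⟨u, h1, h2.trans (List.sublist_cons_self c _), by simp at *; omega⟩
    | cons_cons _ hs' =>
      cases ht with
      | cons _ ht' =>
        obtain ⟨u, h1, h2, h3⟩ := ih _ t hs' ht'
        exact ⟨u, h1.trans (List.sublist_cons_self c _), h2, by simp at *; omega⟩
      | cons_cons _ ht' =>
        obtain ⟨u, h1, h2, h3⟩ := ih _ _ hs' ht'
        exact ⟨c :: u, h1.cons₂ c, h2.cons₂ c, by simp; omega⟩

lemma extend_one {α : Type*} : ∀ {u x : List α}, u.Sublist x → u.length < x.length →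
    ∃ z, u.Sublist z ∧ z.Sublist x ∧ z.length = u.length + 1 := by
  intro u x h
  induction h with
  | slnil => intro hl; simp at hl
  | cons a h ih =>
    intro _
    exact ⟨a :: _, List.sublist_cons_self a _, h.cons₂ a, by simp⟩
  | cons_cons a h ih =>
    intro hl
    obtain ⟨z, h1, h2, h3⟩ := ih (by simpa using hl)
    exact ⟨a :: z, h1.cons₂ a, h2.cons₂ a, by simp [h3]⟩

lemma extend_to {α : Type*} {u x : List α} (h : u.Sublist x) (d : ℕ)
    (h2 : u.length + d ≤ x.length) :
    ∃ z, u.Sublist z ∧ z.Sublist x ∧ z.length = u.length + d := by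
  induction d generalizing u with
  | zero => exact ⟨u, .refl u, h, rfl⟩
  | succ d ih =>
    obtain ⟨z, h1, h2', h3⟩ := extend_one h (by omega)
    obtain ⟨z', g1, g2, g3⟩ := ih h2' (by omega)
    exact ⟨z', h1.trans g1, g2, by omega⟩

lemma common_super {α : Type*} : ∀ (s t u : List α), u.Sublist s → u.Sublist t →
    ∃ w : List α, s.Sublist w ∧ t.Sublist w ∧ w.length + u.length ≤ s.length + t.length := by
  intro s
  induction s with
  | nil =>
    intro t u hs ht
    obtain rfl := List.sublist_nil.mp hs
    exact ⟨t, List.nil_sublist t, .refl t, by simp⟩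
  | cons a s' ihs =>
    intro t
    induction t with
    | nil =>
      intro u hs ht
      obtain rfl := List.sublist_nil.mp ht
      exact ⟨a :: s', .refl _, List.nil_sublist _, by simp⟩
    | cons b t' iht =>
      intro u hs ht
      cases hs with
      | cons _ hs' =>
        obtain ⟨w, w1, w2, w3⟩ := ihs (b :: t') u hs' ht
        exact ⟨a :: w, w1.cons₂ a, w2.trans (List.sublist_cons_self a w), by simp at *; omega⟩
      | cons_cons _ hs' =>
        cases ht with
        | cons _ ht' =>
          obtain ⟨w, w1, w2, w3⟩ := iht _ (hs'.cons₂ a) ht'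
          exact ⟨b :: w, w1.trans (List.sublist_cons_self b w), w2.cons₂ b, by simp at *; omega⟩
        | cons_cons _ ht' =>
          obtain ⟨w, w1, w2, w3⟩ := ihs t' _ hs' ht'
          exact ⟨a :: w, w1.cons₂ a, w2.cons₂ a, by simp at *; omega⟩



/-- A q-ary n-symbol a-deletion b-insertion correcting code: a set of q-ary strings of
length n such that S_{a,b}(x) ∩ S_{a,b}(y) = ∅ for all distinct codewords x, y. -/
def IsDelInsCode (q n a b : ℕ) (C : Set (List (Fin q))) : Prop :=
  (∀ x ∈ C, x.length = n) ∧
    ∀ x ∈ C, ∀ y ∈ C, x ≠ y → sSet q n a b x ∩ sSet q n a b y = ∅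

/-- For a + b ≤ n, a set C of q-ary strings of length n is an
(a+b)-deletion correcting code iff it is an a-deletion b-insertion correcting code.
(An s-deletion correcting code is the case a = s, b = 0.)  In particular, every
(a+b)-deletion correcting code is an a-deletion b-insertion correcting code. -/
theorem stmt_2 (q a b n : ℕ) (hq : 2 ≤ q) (hab : a + b ≤ n)
    (C : Set (List (Fin q))) (hC : ∀ x ∈ C, x.length = n) :
    IsDelInsCode q n (a + b) 0 C ↔ IsDelInsCode q n a b C := by
  constructor
  · rintro ⟨-, hdel⟩
    refine ⟨hC, fun x hx y hy hxy => ?_⟩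
    rw [Set.eq_empty_iff_forall_notMem]
    rintro w ⟨⟨hwl, z1, hz1l, hz1x, hz1w⟩, ⟨-, z2, hz2l, hz2y, hz2w⟩⟩
    obtain ⟨u, hu1, hu2, hu3⟩ := common_sub w z1 z2 hz1w hz2w
    have hkey := hdel x hx y hy hxy
    rw [Set.eq_empty_iff_forall_notMem] at hkey
    have hul : n - (a + b) ≤ u.length := by omega
    refine hkey (u.take (n - (a + b))) ⟨⟨?_, u.take (n - (a + b)), ?_,
      (List.take_sublist _ u).trans (hu1.trans hz1x), .refl _⟩,
      ⟨?_, u.take (n - (a + b)), ?_,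
      (List.take_sublist _ u).trans (hu2.trans hz2y), .refl _⟩⟩ <;>
      simp [List.length_take] <;> omega
  · rintro ⟨-, hins⟩
    refine ⟨hC, fun x hx y hy hxy => ?_⟩
    rw [Set.eq_empty_iff_forall_notMem]
    rintro u ⟨⟨hul, z1, hz1l, hz1x, hz1u⟩, ⟨-, z2, hz2l, hz2y, hz2u⟩⟩
    have hxl := hC x hx
    have hyl := hC y hy
    have hz1 : z1 = u := hz1u.eq_of_length (by omega)
    have hz2 : z2 = u := hz2u.eq_of_length (by omega)
    obtain ⟨s1, hs1u, hs1x, hs1l⟩ := extend_to hz1x b (by omega)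
    obtain ⟨s2, hs2u, hs2y, hs2l⟩ := extend_to hz2y b (by omega)
    obtain ⟨w0, hw1, hw2, hw3⟩ := common_super s1 s2 u (hz1 ▸ hs1u) (hz2 ▸ hs2u)
    set r : List (Fin q) := List.replicate (n - a + b - w0.length) ⟨0, by omega⟩ with hr
    have hwp : w0.Sublist (w0 ++ r) := (List.prefix_append w0 r).sublist
    have hwl : (w0 ++ r).length = n - a + b := by
      simp [hr, List.length_replicate]; omega
    have hkey := hins x hx y hy hxy
    rw [Set.eq_empty_iff_forall_notMem] at hkey
    exact hkey (w0 ++ r) ⟨⟨hwl, s1, by omega, hs1x, hw1.trans hwp⟩,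
      ⟨hwl, s2, by omega, hs2y, hw2.trans hwp⟩⟩
end

section
/- For every q-ary string x of length m and every natural number s, the number of q-ary strings of length m + s that have x as a subsequence equals ∑_{i=0}^{s} C(m+s, i) (q-1)^i. In particular this number does not depend on x. -/
private lemma my_ncard_prod {α β : Type*} (s : Set α) (t : Set β) :
    (s ×ˢ t).ncard = s.ncard * t.ncard := by
  rw [← Nat.card_coe_set_eq, ← Nat.card_coe_set_eq, ← Nat.card_coe_set_eq,
    Nat.card_congr (Equiv.Set.prod s t), Nat.card_prod]

private lemma ncard_all (q n : ℕ) :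
    {w : List (Fin q) | w.length = n}.ncard = q ^ n := by
  rw [← Nat.card_coe_set_eq]
  have e : {w : List (Fin q) | w.length = n} ≃ List.Vector (Fin q) n :=
    ⟨fun w => ⟨w.1, w.2⟩, fun v => ⟨v.1, v.2⟩, fun _ => rfl, fun _ => rfl⟩
  rw [Nat.card_congr e, Nat.card_eq_fintype_card, card_vector, Fintype.card_fin]

private lemma setfin (q n : ℕ) (P : List (Fin q) → Prop) :
    {w : List (Fin q) | w.length = n ∧ P w}.Finite :=
  (List.finite_length_eq (Fin q) n).subset (fun _ h => h.1)

private lemma count_cons (q n : ℕ) (a : Fin q) (x : List (Fin q)) :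
    {w : List (Fin q) | w.length = n + 1 ∧ (a :: x).Sublist w}.ncard =
      {w : List (Fin q) | w.length = n ∧ x.Sublist w}.ncard
        + (q - 1) * {w : List (Fin q) | w.length = n ∧ (a :: x).Sublist w}.ncard := by
  set S1 := {w : List (Fin q) | w.length = n ∧ x.Sublist w}
  set S2 := {w : List (Fin q) | w.length = n ∧ (a :: x).Sublist w}
  have hS1 : S1.Finite := setfin q n _
  have hS2 : S2.Finite := setfin q n _
  have hset : {w : List (Fin q) | w.length = n + 1 ∧ (a :: x).Sublist w} =
      (List.cons a) '' S1 ∪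
      (fun p : Fin q × List (Fin q) => p.1 :: p.2) '' (({a}ᶜ : Set (Fin q)) ×ˢ S2) := by
    ext w
    constructor
    · rintro ⟨hlen, hsub⟩
      match w with
      | [] => simp at hlen
      | b :: w' =>
        simp only [List.length_cons, Nat.add_right_cancel_iff] at hlen
        by_cases hb : b = a
        · subst hb
          exact Or.inl ⟨w', ⟨hlen, hsub.of_cons_cons⟩, rfl⟩
        · refine Or.inr ⟨(b, w'), ⟨hb, hlen, ?_⟩, rfl⟩
          rcases List.cons_sublist_cons'.1 hsub with h | ⟨rfl, _⟩
          · exact h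
          · exact absurd rfl hb
    · rintro (⟨w', ⟨hlen, hsub⟩, rfl⟩ | ⟨⟨b, w'⟩, ⟨hb, hlen, hsub⟩, rfl⟩)
      · exact ⟨by simp [hlen], List.cons_sublist_cons.2 hsub⟩
      · exact ⟨by simp [hlen], hsub.cons _⟩
  rw [hset]
  have hinj2 : Function.Injective (fun p : Fin q × List (Fin q) => p.1 :: p.2) := by
    rintro ⟨b, w⟩ ⟨b', w'⟩ h
    simpa [Prod.ext_iff] using h
  have hdisj : Disjoint ((List.cons a) '' S1)
      ((fun p : Fin q × List (Fin q) => p.1 :: p.2) '' (({a}ᶜ : Set (Fin q)) ×ˢ S2)) := by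
    rw [Set.disjoint_left]
    rintro w ⟨w', _, rfl⟩ ⟨⟨b, v⟩, ⟨hb, _⟩, heq⟩
    exact hb (Set.mem_singleton_iff.2 (List.head_eq_of_cons_eq heq))
  have hcompl : ({a}ᶜ : Set (Fin q)).ncard = q - 1 := by
    rw [Set.compl_eq_univ_diff, Set.ncard_diff (Set.subset_univ {a}),
      Set.ncard_univ, Set.ncard_singleton, Nat.card_eq_fintype_card, Fintype.card_fin]
  rw [Set.ncard_union_eq hdisj (hS1.image _) (((Set.toFinite ({a}ᶜ : Set (Fin q))).prod hS2).image _),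
    Set.ncard_image_of_injective _ List.cons_injective,
    Set.ncard_image_of_injective _ hinj2, my_ncard_prod, hcompl]

private lemma sum_choose_step (n s r : ℕ) :
    ∑ i ∈ Finset.range (s + 2), (n + 1).choose i * r ^ i =
      ∑ i ∈ Finset.range (s + 2), n.choose i * r ^ i
        + r * ∑ i ∈ Finset.range (s + 1), n.choose i * r ^ i := by
  rw [Finset.sum_range_succ' (fun i => (n + 1).choose i * r ^ i) (s + 1),
    Finset.sum_range_succ' (fun i => n.choose i * r ^ i) (s + 1), Finset.mul_sum]
  simp only [Nat.choose_succ_succ, add_mul, Finset.sum_add_distrib, Nat.choose_zero_right,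
    pow_zero, mul_one, pow_succ, Nat.succ_eq_add_one]
  simp only [mul_comm, mul_left_comm, mul_assoc]
  omega

private lemma sum_choose_full (n r : ℕ) :
    ∑ i ∈ Finset.range (n + 1), n.choose i * r ^ i = (r + 1) ^ n := by
  rw [add_pow r 1 n]
  refine Finset.sum_congr rfl fun i _ => ?_
  push_cast
  ring

private lemma main_count (q : ℕ) (hq : 1 ≤ q) : ∀ (s : ℕ) (x : List (Fin q)),
    {w : List (Fin q) | w.length = x.length + s ∧ x.Sublist w}.ncard =
      ∑ i ∈ Finset.range (s + 1), (x.length + s).choose i * (q - 1) ^ i := by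
  intro s
  induction s with
  | zero =>
    intro x
    have : {w : List (Fin q) | w.length = x.length + 0 ∧ x.Sublist w} = {x} := by
      ext w
      simp only [Set.mem_setOf_eq, Set.mem_singleton_iff, Nat.add_zero]
      constructor
      · rintro ⟨hlen, hsub⟩
        exact (hsub.eq_of_length hlen.symm).symm
      · intro h
        subst h
        exact ⟨rfl, List.Sublist.refl _⟩
    rw [this, Set.ncard_singleton]
    simp
  | succ s ih =>
    intro x
    induction x with
    | nil =>
      have h0 : {w : List (Fin q) | w.length = ([] : List (Fin q)).length + (s + 1) ∧
          ([] : List (Fin q)).Sublist w} = {w : List (Fin q) | w.length = s + 1} := by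
        ext w; simp
      rw [h0, ncard_all, List.length_nil, Nat.zero_add, sum_choose_full,
        Nat.sub_add_cancel hq]
    | cons a x ihx =>
      have hlen : (a :: x).length + (s + 1) = (x.length + (s + 1)) + 1 := by
        simp only [List.length_cons]; omega
      rw [hlen, count_cons q (x.length + (s + 1)) a x, ihx]
      have h1 : (a :: x).length + s = x.length + (s + 1) := by
        simp only [List.length_cons]; omega
      have h2 := ih (a :: x)
      rw [h1] at h2
      rw [h2]
      exact (sum_choose_step (x.length + (s + 1)) s (q - 1)).symm

/-- For every q-ary string x of length m (q ≥ 1) and every s, the number of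
q-ary strings of length m + s having x as a subsequence equals
∑_{i=0}^{s} C(m+s, i) (q-1)^i; in particular it does not depend on x. -/
theorem stmt_3 (q m s : ℕ) (hq : 1 ≤ q) (x : List (Fin q)) (hx : x.length = m) :
    {w : List (Fin q) | w.length = m + s ∧ x.Sublist w}.ncard =
      ∑ i ∈ Finset.range (s + 1), (m + s).choose i * (q - 1) ^ i := by
  subst hx
  exact main_count q hq s x
end

section
/- For all natural numbers q ≥ 2 and l, a, b, the number of edges of B_{q,l,a,b} satisfies |E(B_{q,l,a,b})| ≤ q^l · I_{q,a,l+a} · I_{q,b,l+b}, where I_{q,s,n} = ∑_{i=0}^{s} C(n, i)(q-1)^i. -/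
/-- The edge set of the bipartite graph B_{q,l,a,b}: pairs (x, y) where x has length
l + a, y has length l + b, and x and y have a common subsequence of length l. -/
def edgeSet (q l a b : ℕ) : Set (List (Fin q) × List (Fin q)) :=
  {p | p.1.length = l + a ∧ p.2.length = l + b ∧
    ∃ z : List (Fin q), z.length = l ∧ z.Sublist p.1 ∧ z.Sublist p.2}

/-- I_{q,s,n} = ∑_{i=0}^{s} C(n, i)(q-1)^i. -/
def insNum (q s n : ℕ) : ℕ := ∑ i ∈ Finset.range (s + 1), n.choose i * (q - 1) ^ i

open Finset

def allLists (q : ℕ) : ℕ → Finset (List (Fin q))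
  | 0 => {[]}
  | n + 1 => (Finset.univ ×ˢ allLists q n).image fun p => p.1 :: p.2

lemma mem_allLists (q n : ℕ) (x : List (Fin q)) : x ∈ allLists q n ↔ x.length = n := by
  induction n generalizing x with
  | zero => simp [allLists, List.length_eq_zero_iff]
  | succ n ih =>
    cases x with
    | nil => simp [allLists]
    | cons c t => simp [allLists, ih]

lemma card_allLists (q n : ℕ) : (allLists q n).card = q ^ n := by
  induction n with
  | zero => simp [allLists]
  | succ n ih =>
    rw [allLists, Finset.card_image_of_injective, Finset.card_product, Finset.card_univ,
      Fintype.card_fin, ih, pow_succ, mul_comm]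
    intro p p' h
    simpa [Prod.ext_iff] using h

def supers (q : ℕ) (z : List (Fin q)) (n : ℕ) : Finset (List (Fin q)) :=
  (allLists q n).filter (z.Sublist ·)

lemma supers_eq_empty (q : ℕ) (z : List (Fin q)) (n : ℕ) (h : n < z.length) :
    supers q z n = ∅ := by
  ext x
  simp only [supers, Finset.mem_filter, mem_allLists, Finset.notMem_empty, iff_false, not_and]
  intro hx hs
  have := hs.length_le
  omega

lemma insNum_zero (q n : ℕ) : insNum q 0 n = 1 := by simp [insNum]

lemma insNum_succ_succ (q a n : ℕ) :
    insNum q (a + 1) (n + 1) = insNum q (a + 1) n + (q - 1) * insNum q a n := by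
  unfold insNum
  rw [Finset.sum_range_succ' (fun i => (n + 1).choose i * (q - 1) ^ i),
    Finset.sum_range_succ' (fun i => n.choose i * (q - 1) ^ i), Finset.mul_sum]
  have hterm : ∀ k, (n + 1).choose (k + 1) * (q - 1) ^ (k + 1) =
      n.choose (k + 1) * (q - 1) ^ (k + 1) + (q - 1) * (n.choose k * (q - 1) ^ k) := by
    intro k
    rw [Nat.choose_succ_succ, add_mul, pow_succ]
    ring
  rw [Finset.sum_congr rfl fun k _ => hterm k, Finset.sum_add_distrib]
  simp only [Nat.choose_zero_right, pow_zero, mul_one]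
  ring

lemma pow_le_insNum (q n : ℕ) : q ^ n ≤ insNum q n n := by
  rcases Nat.eq_zero_or_pos q with h | h
  · subst h
    cases n with
    | zero => simp [insNum]
    | succ n => simp
  · have hq : q - 1 + 1 = q := Nat.succ_pred_eq_of_pos h
    refine le_of_eq ?_
    calc q ^ n = (q - 1 + 1) ^ n := by rw [hq]
      _ = ∑ i ∈ Finset.range (n + 1), (q - 1) ^ i * 1 ^ (n - i) * n.choose i := add_pow _ _ _
      _ = insNum q n n := by simp [insNum, mul_comm]

lemma card_supers_le (q : ℕ) (n : ℕ) (z : List (Fin q)) :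
    (supers q z n).card ≤ insNum q (n - z.length) n := by
  induction n generalizing z with
  | zero =>
    have h : supers q z 0 ⊆ {[]} := by
      intro x hx
      have := (Finset.mem_filter.mp hx).1
      rw [mem_allLists] at this
      simp [List.length_eq_zero_iff.mp this]
    calc (supers q z 0).card ≤ 1 := by simpa using Finset.card_le_card h
      _ ≤ insNum q (0 - z.length) 0 := by simp [insNum]
  | succ n ih =>
    cases z with
    | nil =>
      have : supers q [] (n + 1) = allLists q (n + 1) := by
        simp [supers, Finset.filter_true_of_mem, List.nil_sublist]
      rw [this, card_allLists]
      simpa using pow_le_insNum q (n + 1)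
    | cons c zt =>
      by_cases hl : zt.length + 1 ≤ n + 1
      · have hsub : supers q (c :: zt) (n + 1) ⊆
            Finset.univ.biUnion fun d =>
              (if d = c then supers q zt n else supers q (c :: zt) n).image (d :: ·) := by
          intro x hx
          obtain ⟨hmem, hs⟩ := Finset.mem_filter.mp hx
          rw [mem_allLists] at hmem
          cases x with
          | nil => simp at hmem
          | cons d t =>
            simp only [List.length_cons, Nat.add_right_cancel_iff] at hmem
            rw [Finset.mem_biUnion]
            refine ⟨d, Finset.mem_univ _, Finset.mem_image.mpr ⟨t, ?_, rfl⟩⟩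
            have ht : t ∈ allLists q n := (mem_allLists q n t).mpr hmem
            rcases hs with _ | ⟨hs⟩ | ⟨hs⟩
            · by_cases hd : d = c
              · simp only [if_pos hd]
                exact Finset.mem_filter.mpr ⟨ht, (List.sublist_cons_self c zt).trans ‹_›⟩
              · simp only [if_neg hd]
                exact Finset.mem_filter.mpr ⟨ht, ‹_›⟩
            · simp only [if_pos rfl]
              exact Finset.mem_filter.mpr ⟨ht, ‹_›⟩
        have hcard : (supers q (c :: zt) (n + 1)).card ≤
            (supers q zt n).card + (q - 1) * (supers q (c :: zt) n).card := by
          calc (supers q (c :: zt) (n + 1)).card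
              ≤ _ := Finset.card_le_card hsub
            _ ≤ ∑ d : Fin q, ((if d = c then supers q zt n
                  else supers q (c :: zt) n).image (d :: ·)).card := Finset.card_biUnion_le
            _ ≤ ∑ d : Fin q, (if d = c then supers q zt n
                  else supers q (c :: zt) n).card :=
                Finset.sum_le_sum fun d _ => Finset.card_image_le
            _ = (supers q zt n).card + (q - 1) * (supers q (c :: zt) n).card := by
                rw [Finset.sum_eq_add_sum_sdiff_singleton_of_mem (Finset.mem_univ c)
                  (fun d => (if d = c then supers q zt n else supers q (c :: zt) n).card)]
                rw [if_pos rfl]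
                congr 1
                rw [Finset.sum_congr rfl fun d hd => by
                    rw [if_neg (show ¬ d = c by simpa using (Finset.mem_sdiff.mp hd).2)],
                  Finset.sum_const, smul_eq_mul]
                congr 1
                rw [Finset.card_sdiff_of_subset (by simp), Finset.card_univ, Fintype.card_fin,
                  Finset.card_singleton]
        rcases eq_or_lt_of_le (Nat.lt_succ_iff.mp hl) with heq | hlt
        · -- zt.length = n
          rw [supers_eq_empty q (c :: zt) n (by simp [heq])] at hcard
          simp only [Finset.card_empty, Nat.mul_zero, Nat.add_zero] at hcard
          calc (supers q (c :: zt) (n + 1)).card ≤ (supers q zt n).card := hcard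
            _ ≤ insNum q (n - zt.length) n := ih zt
            _ = 1 := by rw [heq, Nat.sub_self, insNum_zero]
            _ ≤ insNum q (n + 1 - (c :: zt).length) (n + 1) := by
                rw [show n + 1 - (c :: zt).length = 0 by simp [heq], insNum_zero]
        · obtain ⟨m, hm⟩ : ∃ m, n - zt.length = m + 1 := ⟨n - zt.length - 1, by omega⟩
          have key : n + 1 - (c :: zt).length = m + 1 := by
            simp only [List.length_cons]; omega
          rw [key, insNum_succ_succ]
          have h1 : (supers q zt n).card ≤ insNum q (m + 1) n := by
            rw [← hm]; exact ih zt
          have h2 : (supers q (c :: zt) n).card ≤ insNum q m n := by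
            have h := ih (c :: zt)
            rwa [show n - (c :: zt).length = m from by simp only [List.length_cons]; omega] at h
          exact le_trans hcard (Nat.add_le_add h1 (Nat.mul_le_mul_left _ h2))
      · push_neg at hl
        rw [supers_eq_empty q _ _ (by simpa using hl)]
        simp

/-- |E(B_{q,l,a,b})| ≤ q^l · I_{q,a,l+a} · I_{q,b,l+b}. -/
theorem stmt_4 (q l a b : ℕ) (hq : 2 ≤ q) :
    (edgeSet q l a b).ncard ≤ q ^ l * insNum q a (l + a) * insNum q b (l + b) := by
  classical
  set E : Finset (List (Fin q) × List (Fin q)) :=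
    (allLists q l).biUnion (fun z => supers q z (l + a) ×ˢ supers q z (l + b)) with hE
  have hsub : edgeSet q l a b ⊆ ↑E := by
    rintro ⟨x, y⟩ ⟨hx, hy, z, hz, hzx, hzy⟩
    rw [Finset.mem_coe, hE, Finset.mem_biUnion]
    exact ⟨z, (mem_allLists q l z).mpr hz, Finset.mem_product.mpr
      ⟨Finset.mem_filter.mpr ⟨(mem_allLists _ _ _).mpr hx, hzx⟩,
       Finset.mem_filter.mpr ⟨(mem_allLists _ _ _).mpr hy, hzy⟩⟩⟩
  calc (edgeSet q l a b).ncard ≤ E.card := by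
        rw [← Set.ncard_coe_finset]
        exact Set.ncard_le_ncard hsub E.finite_toSet
    _ ≤ ∑ z ∈ allLists q l, (supers q z (l + a) ×ˢ supers q z (l + b)).card :=
        Finset.card_biUnion_le
    _ ≤ ∑ _z ∈ allLists q l, insNum q a (l + a) * insNum q b (l + b) := by
        refine Finset.sum_le_sum fun z hz => ?_
        rw [Finset.card_product]
        have hzl : z.length = l := (mem_allLists q l z).mp hz
        refine Nat.mul_le_mul ?_ ?_
        · simpa [hzl, Nat.add_sub_cancel_left] using card_supers_le q (l + a) z
        · simpa [hzl, Nat.add_sub_cancel_left] using card_supers_le q (l + b) z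
    _ = q ^ l * insNum q a (l + a) * insNum q b (l + b) := by
        rw [Finset.sum_const, card_allLists, smul_eq_mul, mul_assoc]
end

section
/- For all natural numbers q ≥ 2 and l, a, b, with s = a + b, the number of edges of B_{q,l,a,b} satisfies |E(B_{q,l,a,b})| ≥ C(s, a) · (q-1)^s · ∑_{(c_0,…,c_s) ∈ M(s+1, l, 2)} ∏_{i=0}^{s} (q^{c_i} - q(q-1)). -/
/-- M(t, l, k): the finite set of t-tuples (c_0, …, c_{t-1}) of natural numbers with
c_i ≥ k for all i and ∑_i c_i = l. -/
def compSet (t l k : ℕ) : Finset (Fin t → ℕ) :=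
  (Finset.Nat.antidiagonalTuple t l).filter fun c => ∀ i, k ≤ c i


namespace Stmt5

/-- Alternating list `x, y, x, y, ...` of length `n`. -/
def altL {α : Type*} (x y : α) : ℕ → List α
  | 0 => []
  | n+1 => x :: altL y x n

@[simp] lemma altL_length {α : Type*} (x y : α) (n : ℕ) : (altL x y n).length = n := by
  induction n generalizing x y with
  | zero => rfl
  | succ n ih => simp [altL, ih]

lemma altL_getElem {α : Type*} : ∀ (n k : ℕ) (x y : α) (hk : k < n),
    (altL x y n)[k]'(by simpa using hk) = if k % 2 = 0 then x else y
  | n+1, 0, x, y, hk => by simp [altL]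
  | n+1, k+1, x, y, hk => by
    have h := altL_getElem n k y x (by omega)
    simp only [altL, List.getElem_cons_succ]
    rw [h]
    rcases Nat.even_or_odd k with he | ho
    · have h1 : k % 2 = 0 := Nat.even_iff.mp he
      have h2 : (k+1) % 2 = 1 := by omega
      simp [h1, h2]
    · have h1 : k % 2 = 1 := Nat.odd_iff.mp ho
      have h2 : (k+1) % 2 = 0 := by omega
      simp [h1, h2]

/-- `xs` is an alternating string on two distinct symbols. -/
def IsAlt {α : Type*} (xs : List α) : Prop :=
  ∃ x y, x ≠ y ∧ xs = altL x y xs.length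

instance {α : Type*} [Fintype α] [DecidableEq α] (xs : List α) : Decidable (IsAlt xs) := by
  unfold IsAlt; infer_instance

lemma isAlt_of_forall {α : Type*} {xs : List α} {x y : α} (hxy : x ≠ y)
    (h : ∀ k (hk : k < xs.length), xs[k] = if k % 2 = 0 then x else y) : IsAlt xs := by
  refine ⟨x, y, hxy, ?_⟩
  apply List.ext_getElem (by simp)
  intro k h1 h2
  rw [h k h1, altL_getElem _ _ _ _ h1]

lemma headI_eq_getElem {α : Type*} [Inhabited α] (xs : List α) (h : 0 < xs.length) :
    xs.headI = xs[0] := by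
  cases xs with
  | nil => simp at h
  | cons a t => rfl

lemma headI_append {α : Type*} [Inhabited α] {xs : List α} (ys : List α) (h : xs ≠ []) :
    (xs ++ ys).headI = xs.headI := by
  cases xs with
  | nil => simp at h
  | cons a t => rfl

/-- The key "shift" lemma: if two block decompositions are off by one inserted
symbol in both directions, then one of the two first blocks is alternating. -/
lemma shift_alt {α : Type*} [Inhabited α] {P Q u1 u2 u3 u4 : List α} {e e' : α}
    (hP : 1 ≤ P.length) (hQ : 1 ≤ Q.length)
    (h1 : P ++ u1 = e :: (Q ++ u2)) (h2 : Q ++ u3 = e' :: (P ++ u4))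
    (he : e ≠ Q.headI) : IsAlt P ∨ IsAlt Q := by
  have hP0 : P[0]'(by omega) = e := by
    have h := List.getElem_of_eq h1 (i := 0) (by simp; omega)
    rwa [List.getElem_append_left (by omega), List.getElem_cons_zero] at h
  have hQ0 : Q[0]'(by omega) = e' := by
    have h := List.getElem_of_eq h2 (i := 0) (by simp; omega)
    rwa [List.getElem_append_left (by omega), List.getElem_cons_zero] at h
  have key1 : ∀ k (hk : k + 1 < P.length) (hk' : k < Q.length),
      P[k+1] = Q[k] := by
    intro k hk hk'
    have h := List.getElem_of_eq h1 (i := k+1) (by simp; omega)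
    rwa [List.getElem_append_left (by omega), List.getElem_cons_succ,
      List.getElem_append_left (by omega)] at h
  have key2 : ∀ k (hk : k + 1 < Q.length) (hk' : k < P.length),
      Q[k+1] = P[k] := by
    intro k hk hk'
    have h := List.getElem_of_eq h2 (i := k+1) (by simp; omega)
    rwa [List.getElem_append_left (by omega), List.getElem_cons_succ,
      List.getElem_append_left (by omega)] at h
  have he' : e ≠ e' := by
    rwa [headI_eq_getElem Q (by omega), hQ0] at he
  have main : ∀ k, (∀ (hk : k < P.length), k ≤ Q.length →
        P[k] = if k % 2 = 0 then e else e') ∧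
      (∀ (hk : k < Q.length), k ≤ P.length →
        Q[k] = if k % 2 = 0 then e' else e) := by
    intro k
    induction k using Nat.strong_induction_on with
    | _ k ih =>
      match k with
      | 0 => exact ⟨fun hk _ => by simpa using hP0, fun hk _ => by simpa using hQ0⟩
      | 1 =>
        constructor
        · intro hk hk'
          rw [key1 0 hk (by omega), hQ0]; simp
        · intro hk hk'
          rw [key2 0 hk (by omega), hP0]; simp
      | k+2 =>
        constructor
        · intro hk hk'
          rw [key1 (k+1) hk (by omega)]
          rw [(ih (k+1) (by omega)).2 (by omega) (by omega)]
          rcases Nat.even_or_odd k with hpar | hpar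
          · have h1 : k % 2 = 0 := Nat.even_iff.mp hpar
            have e1 : (k+1) % 2 = 1 := by omega
            have e2 : (k+2) % 2 = 0 := by omega
            simp [e1, e2]
          · have h1 : k % 2 = 1 := Nat.odd_iff.mp hpar
            have e1 : (k+1) % 2 = 0 := by omega
            have e2 : (k+2) % 2 = 1 := by omega
            simp [e1, e2]
        · intro hk hk'
          rw [key2 (k+1) hk (by omega)]
          rw [(ih (k+1) (by omega)).1 (by omega) (by omega)]
          rcases Nat.even_or_odd k with hpar | hpar
          · have h1 : k % 2 = 0 := Nat.even_iff.mp hpar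
            have e1 : (k+1) % 2 = 1 := by omega
            have e2 : (k+2) % 2 = 0 := by omega
            simp [e1, e2]
          · have h1 : k % 2 = 1 := Nat.odd_iff.mp hpar
            have e1 : (k+1) % 2 = 0 := by omega
            have e2 : (k+2) % 2 = 1 := by omega
            simp [e1, e2]
  by_cases hle : P.length ≤ Q.length + 1
  · exact Or.inl (isAlt_of_forall he' (fun k hk => (main k).1 hk (by omega)))
  · exact Or.inr (isAlt_of_forall (Ne.symm he') (fun k hk => (main k).2 hk (by omega)))



variable {α : Type*} [Inhabited α]

section Build

/-- An item: a block, a side (true = insert into `x`), and an inserted symbol. -/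
abbrev Item (α : Type*) := List α × Bool × α

/-- Build the pair `(x, y)` from a list of (block, side, symbol) items and a final block. -/
def buildP : List (Item α) → List α → List α × List α
  | [], wl => (wl, wl)
  | (w, sd, e) :: r, wl =>
    let p := buildP r wl
    if sd then (w ++ e :: p.1, w ++ p.2) else (w ++ p.1, w ++ e :: p.2)

/-- The first block of the decomposition. -/
def fBlock : List (Item α) → List α → List α
  | [], wl => wl
  | (w, _, _) :: _, _ => w

/-- Validity of a decomposition: all blocks have length ≥ 2 and are non-alternating,
and each inserted symbol differs from the first symbol of the following block. -/
def ValidP : List (Item α) → List α → Prop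
  | [], wl => 2 ≤ wl.length ∧ ¬ IsAlt wl
  | (w, _, e) :: r, wl => 2 ≤ w.length ∧ ¬ IsAlt w ∧ e ≠ (fBlock r wl).headI ∧ ValidP r wl

lemma fBlock_spec : ∀ (r : List (Item α)) (wl : List α), ValidP r wl →
    2 ≤ (fBlock r wl).length ∧ ¬ IsAlt (fBlock r wl)
  | [], wl, h => ⟨h.1, h.2⟩
  | (w, sd, e) :: r, wl, h => ⟨h.1, h.2.1⟩

lemma buildP_cons (w : List α) (sd : Bool) (e : α) (r : List (Item α)) (wl : List α) :
    buildP ((w, sd, e) :: r) wl =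
      (w ++ (if sd then e :: (buildP r wl).1 else (buildP r wl).1),
       w ++ (if sd then (buildP r wl).2 else e :: (buildP r wl).2)) := by
  cases sd <;> simp [buildP]

lemma buildP_fst_eq : ∀ (r : List (Item α)) (wl : List α),
    ∃ t, (buildP r wl).1 = fBlock r wl ++ t
  | [], wl => ⟨[], by simp [buildP, fBlock]⟩
  | (w, sd, e) :: r, wl => by
    cases sd
    · exact ⟨(buildP r wl).1, by simp [buildP, fBlock]⟩
    · exact ⟨e :: (buildP r wl).1, by simp [buildP, fBlock]⟩

lemma buildP_snd_eq : ∀ (r : List (Item α)) (wl : List α),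
    ∃ t, (buildP r wl).2 = fBlock r wl ++ t
  | [], wl => ⟨[], by simp [buildP, fBlock]⟩
  | (w, sd, e) :: r, wl => by
    cases sd
    · exact ⟨e :: (buildP r wl).2, by simp [buildP, fBlock]⟩
    · exact ⟨(buildP r wl).2, by simp [buildP, fBlock]⟩

lemma fBlock_ne_nil {r : List (Item α)} {wl : List α} (h : ValidP r wl) :
    fBlock r wl ≠ [] := by
  have h2 := (fBlock_spec r wl h).1
  intro hc
  rw [hc] at h2
  simp at h2

/-- For a nonempty decomposition, the two built strings differ. -/
lemma buildP_fst_ne_snd {w : List α} {sd : Bool} {e : α} {r : List (Item α)} {wl : List α}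
    (hv : ValidP ((w, sd, e) :: r) wl) :
    (buildP ((w, sd, e) :: r) wl).1 ≠ (buildP ((w, sd, e) :: r) wl).2 := by
  obtain ⟨t1, ht1⟩ := buildP_fst_eq r wl
  obtain ⟨t2, ht2⟩ := buildP_snd_eq r wl
  have hfb : fBlock r wl ≠ [] := fBlock_ne_nil hv.2.2.2
  have hgap : e ≠ (fBlock r wl).headI := hv.2.2.1
  rw [buildP_cons]
  simp only [ne_eq, Prod.mk.injEq, not_and]
  intro h
  have h' := List.append_cancel_left h
  cases sd with
  | true =>
    simp only [Bool.false_eq_true, reduceIte] at h'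
    rw [ht2] at h'
    have he : e = (fBlock r wl ++ t2).headI := by rw [← h']; rfl
    rw [headI_append _ hfb] at he
    exact hgap he
  | false =>
    simp only [Bool.false_eq_true, reduceIte] at h'
    rw [ht1] at h'
    have he : e = (fBlock r wl ++ t1).headI := by rw [h']; rfl
    rw [headI_append _ hfb] at he
    exact hgap he

/-- heads of the two parts after the first block differ. -/
lemma parts_head_ne {w : List α} {sd : Bool} {e : α} {r : List (Item α)} {wl : List α}
    (hv : ValidP ((w, sd, e) :: r) wl) :
    (if sd then e :: (buildP r wl).1 else (buildP r wl).1).headI ≠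
    (if sd then (buildP r wl).2 else e :: (buildP r wl).2).headI := by
  obtain ⟨t1, ht1⟩ := buildP_fst_eq r wl
  obtain ⟨t2, ht2⟩ := buildP_snd_eq r wl
  have hfb : fBlock r wl ≠ [] := fBlock_ne_nil hv.2.2.2
  have hgap : e ≠ (fBlock r wl).headI := hv.2.2.1
  cases sd with
  | true =>
    simp only [Bool.false_eq_true, reduceIte, List.headI_cons, ht2, headI_append _ hfb]
    exact hgap
  | false =>
    simp only [Bool.false_eq_true, reduceIte, List.headI_cons, ht1, headI_append _ hfb]
    exact fun hh => hgap hh.symm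

lemma parts_ne_nil {e : α} {r : List (Item α)} {wl : List α} (hv : ValidP r wl) (sd : Bool) :
    (if sd then e :: (buildP r wl).1 else (buildP r wl).1) ≠ [] ∧
    (if sd then (buildP r wl).2 else e :: (buildP r wl).2) ≠ [] := by
  obtain ⟨t1, ht1⟩ := buildP_fst_eq r wl
  obtain ⟨t2, ht2⟩ := buildP_snd_eq r wl
  have hfb : fBlock r wl ≠ [] := fBlock_ne_nil hv
  cases sd <;> constructor <;> simp_all

/-- Auxiliary: block length comparison. -/
lemma block_len_le {w w' A1 A2 A1' A2' : List α}
    (hx : w ++ A1 = w' ++ A1') (hy : w ++ A2 = w' ++ A2')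
    (hA1' : A1' ≠ []) (hA2' : A2' ≠ [])
    (hne : A1.headI ≠ A2.headI) : w'.length ≤ w.length := by
  by_contra hlt
  push_neg at hlt
  have e1 : A1 = w'.drop w.length ++ A1' := by
    have h := congrArg (fun L => L.drop w.length) hx
    simpa [List.drop_left, List.drop_append_of_le_length (le_of_lt hlt)] using h
  have e2 : A2 = w'.drop w.length ++ A2' := by
    have h := congrArg (fun L => L.drop w.length) hy
    simpa [List.drop_left, List.drop_append_of_le_length (le_of_lt hlt)] using h
  have hd : w'.drop w.length ≠ [] := by
    intro h
    have hlen := congrArg List.length h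
    simp at hlen
    omega
  rw [e1, e2, headI_append _ hd, headI_append _ hd] at hne
  exact hne rfl

/-- Main injectivity of `buildP` on valid decompositions. -/
theorem buildP_inj : ∀ (L L' : List (Item α)) (wl wl' : List α),
    ValidP L wl → ValidP L' wl' → buildP L wl = buildP L' wl' → L = L' ∧ wl = wl' := by
  intro L
  induction L with
  | nil =>
    intro L' wl wl' hv hv' h
    cases L' with
    | nil =>
      simp only [buildP, Prod.mk.injEq] at h
      exact ⟨rfl, h.1⟩
    | cons it r' =>
      exfalso
      obtain ⟨w', sd', e'⟩ := it
      apply buildP_fst_ne_snd hv'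
      rw [show buildP ([] : List (Item α)) wl = (wl, wl) from rfl] at h
      rw [← h]
  | cons it r ih =>
    intro L' wl wl' hv hv' h
    cases L' with
    | nil =>
      exfalso
      obtain ⟨w, sd, e⟩ := it
      apply buildP_fst_ne_snd hv
      rw [show buildP ([] : List (Item α)) wl' = (wl', wl') from rfl] at h
      rw [h]
    | cons it' r' =>
      obtain ⟨w, sd, e⟩ := it
      obtain ⟨w', sd', e'⟩ := it'
      rw [buildP_cons, buildP_cons, Prod.mk.injEq] at h
      obtain ⟨hx, hy⟩ := h
      have hne := parts_head_ne hv
      have hne' := parts_head_ne hv'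
      have hnil := parts_ne_nil (e := e) hv.2.2.2 sd
      have hnil' := parts_ne_nil (e := e') hv'.2.2.2 sd'
      have hlen : w.length = w'.length :=
        le_antisymm
          (block_len_le hx.symm hy.symm hnil.1 hnil.2 hne')
          (block_len_le hx hy hnil'.1 hnil'.2 hne)
      obtain ⟨hw, hA1⟩ := List.append_inj hx hlen
      have hA2 := List.append_cancel_left (hw ▸ hy)
      subst hw
      obtain ⟨t1, ht1⟩ := buildP_fst_eq r wl
      obtain ⟨t2, ht2⟩ := buildP_snd_eq r wl
      obtain ⟨t1', ht1'⟩ := buildP_fst_eq r' wl'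
      obtain ⟨t2', ht2'⟩ := buildP_snd_eq r' wl'
      have hspec := fBlock_spec r wl hv.2.2.2
      have hspec' := fBlock_spec r' wl' hv'.2.2.2
      have hgap : e ≠ (fBlock r wl).headI := hv.2.2.1
      have hgap' : e' ≠ (fBlock r' wl').headI := hv'.2.2.1
      cases sd with
      | true =>
        cases sd' with
        | true =>
          simp only [Bool.false_eq_true, reduceIte, List.cons.injEq] at hA1
          simp only [Bool.false_eq_true, reduceIte] at hA2
          have hp : buildP r wl = buildP r' wl' := Prod.ext hA1.2 hA2
          obtain ⟨hr, hwl⟩ := ih r' wl wl' hv.2.2.2 hv'.2.2.2 hp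
          exact ⟨by rw [hA1.1, hr], hwl⟩
        | false =>
          exfalso
          simp only [Bool.false_eq_true, reduceIte] at hA1 hA2
          rw [ht1, ht1'] at hA1
          rw [ht2, ht2'] at hA2
          have halt := shift_alt (P := fBlock r' wl') (Q := fBlock r wl)
            (by omega) (by omega) hA1.symm hA2 hgap
          rcases halt with hcontra | hcontra
          · exact hspec'.2 hcontra
          · exact hspec.2 hcontra
      | false =>
        cases sd' with
        | true =>
          exfalso
          simp only [Bool.false_eq_true, reduceIte] at hA1 hA2
          rw [ht1, ht1'] at hA1
          rw [ht2, ht2'] at hA2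
          have halt := shift_alt (P := fBlock r' wl') (Q := fBlock r wl)
            (by omega) (by omega) hA2.symm hA1 hgap
          rcases halt with hcontra | hcontra
          · exact hspec'.2 hcontra
          · exact hspec.2 hcontra
        | false =>
          simp only [Bool.false_eq_true, reduceIte] at hA1
          simp only [Bool.false_eq_true, reduceIte, List.cons.injEq] at hA2
          have hp : buildP r wl = buildP r' wl' := Prod.ext hA1 hA2.2
          obtain ⟨hr, hwl⟩ := ih r' wl wl' hv.2.2.2 hv'.2.2.2 hp
          exact ⟨by rw [hA2.1, hr], hwl⟩

end Build




/-- The common subsequence determined by a decomposition. -/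
def zOf : List (Item α) → List α → List α
  | [], wl => wl
  | (w, _, _) :: r, wl => w ++ zOf r wl

omit [Inhabited α] in
lemma zOf_sublist_fst : ∀ (L : List (Item α)) (wl : List α),
    (zOf L wl).Sublist (buildP L wl).1
  | [], wl => by simp [zOf, buildP]
  | (w, sd, e) :: r, wl => by
    have ih := zOf_sublist_fst r wl
    cases sd
    · simpa [zOf, buildP] using ih.append_left w
    · simpa [zOf, buildP] using (ih.cons e).append_left w

omit [Inhabited α] in
lemma zOf_sublist_snd : ∀ (L : List (Item α)) (wl : List α),
    (zOf L wl).Sublist (buildP L wl).2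
  | [], wl => by simp [zOf, buildP]
  | (w, sd, e) :: r, wl => by
    have ih := zOf_sublist_snd r wl
    cases sd
    · simpa [zOf, buildP] using (ih.cons e).append_left w
    · simpa [zOf, buildP] using ih.append_left w

omit [Inhabited α] in
lemma buildP_fst_length : ∀ (L : List (Item α)) (wl : List α),
    (buildP L wl).1.length = (zOf L wl).length + L.countP (fun it => it.2.1)
  | [], wl => by simp [zOf, buildP]
  | (w, sd, e) :: r, wl => by
    have ih := buildP_fst_length r wl
    cases sd <;> simp [zOf, buildP, List.countP_cons, ih] <;> omega

omit [Inhabited α] in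
lemma buildP_snd_length : ∀ (L : List (Item α)) (wl : List α),
    (buildP L wl).2.length = (zOf L wl).length + L.countP (fun it => !it.2.1)
  | [], wl => by simp [zOf, buildP]
  | (w, sd, e) :: r, wl => by
    have ih := buildP_snd_length r wl
    cases sd <;> simp [zOf, buildP, List.countP_cons, ih] <;> omega

omit [Inhabited α] in
lemma countP_ofFn {β : Type*} : ∀ {n : ℕ} (f : Fin n → β) (p : β → Bool),
    (List.ofFn f).countP p = ∑ i, if p (f i) then 1 else 0
  | 0, f, p => by simp
  | n+1, f, p => by
    rw [List.ofFn_succ, List.countP_cons, countP_ofFn (fun i => f i.succ) p,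
      Fin.sum_univ_succ]
    omega

omit [Inhabited α] in
lemma zOf_length : ∀ (L : List (Item α)) (wl : List α),
    (zOf L wl).length = (L.map (fun it => it.1.length)).sum + wl.length
  | [], wl => by simp [zOf]
  | (w, sd, e) :: r, wl => by
    simp [zOf, zOf_length r wl]; omega

/-- Validity of the encoded data. -/
lemma validP_encode : ∀ (s : ℕ) (blk : Fin (s+1) → List α) (sdf : Fin s → Bool)
    (ef : Fin s → α)
    (hblk : ∀ j, 2 ≤ (blk j).length ∧ ¬ IsAlt (blk j))
    (hef : ∀ i : Fin s, ef i ≠ (blk i.succ).headI),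
    ValidP (List.ofFn (fun i : Fin s => ((blk i.castSucc, sdf i, ef i) : Item α)))
      (blk (Fin.last s))
  | 0, blk, sdf, ef, hblk, hef => by
    simpa [ValidP] using hblk (Fin.last 0)
  | s+1, blk, sdf, ef, hblk, hef => by
    rw [List.ofFn_succ]
    have ih := validP_encode s (fun j => blk j.succ) (fun i => sdf i.succ)
      (fun i => ef i.succ) (fun j => hblk j.succ)
      (fun i => by simpa using hef i.succ)
    refine ⟨(hblk 0).1, (hblk 0).2, ?_, ?_⟩
    · -- gap constraint for the first inserted symbol
      cases s with
      | zero =>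
        simp only [List.ofFn_zero]
        show ef 0 ≠ (blk (Fin.last 1)).headI
        have hfin : Fin.last 1 = (0 : Fin 1).succ := by decide
        rw [hfin]; exact hef 0
      | succ m =>
        rw [List.ofFn_succ]
        show ef 0 ≠ (blk ((0 : Fin (m+1)).succ.castSucc)).headI
        have hfin : (0 : Fin (m+1)).succ.castSucc = (0 : Fin (m+2)).succ := by
          ext; simp
        rw [hfin]; exact hef 0
    · -- recursive validity
      simp only [Fin.succ_castSucc, Fin.succ_last] at ih
      exact ih



/-- Good blocks of length `m`: non-alternating vectors. -/
def goodVec (α : Type*) [Fintype α] [DecidableEq α] (m : ℕ) : Finset (Fin m → α) :=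
  Finset.univ.filter fun v => ¬ IsAlt (List.ofFn v)

lemma isAlt_ofFn_eq {α : Type*} {m : ℕ} (hm : 2 ≤ m) {v : Fin m → α}
    (h : IsAlt (List.ofFn v)) :
    ∀ i : Fin m, v i = if (i : ℕ) % 2 = 0 then v ⟨0, by omega⟩ else v ⟨1, by omega⟩ := by
  obtain ⟨x, y, hxy, heq⟩ := h
  have hv : ∀ i : Fin m, v i = if (i : ℕ) % 2 = 0 then x else y := by
    intro i
    have h1 : (List.ofFn v)[(i : ℕ)]'(by simp) = v i := by simp
    rw [List.getElem_of_eq heq (by simp)] at h1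
    rw [← h1, altL_getElem _ _ _ _ (by simp [i.isLt])]
  intro i
  rw [hv i, hv ⟨0, by omega⟩, hv ⟨1, by omega⟩]
  simp

lemma card_goodVec_ge (α : Type*) [Fintype α] [DecidableEq α] (m : ℕ) (hm : 2 ≤ m) :
    Fintype.card α ^ m - Fintype.card α * (Fintype.card α - 1) ≤ (goodVec α m).card := by
  classical
  set Q := Fintype.card α with hQ
  -- the alternating set
  set altS : Finset (Fin m → α) := Finset.univ.filter fun v => IsAlt (List.ofFn v) with haltS
  have hsplit : altS.card + (goodVec α m).card = Q ^ m := by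
    rw [haltS, goodVec, Finset.card_filter_add_card_filter_not, Finset.card_univ]
    simp [hQ]
  -- bound the alternating set by injection into distinct pairs
  have hinj : altS.card ≤ ((Finset.univ : Finset (α × α)).filter fun p => p.1 ≠ p.2).card := by
    apply Finset.card_le_card_of_injOn (fun v => (v ⟨0, by omega⟩, v ⟨1, by omega⟩))
    · intro v hv
      rw [haltS, Finset.mem_coe, Finset.mem_filter] at hv
      obtain ⟨x, y, hxy, heq⟩ := hv.2
      have h0 : v ⟨0, by omega⟩ = x := by
        have := isAlt_ofFn_eq hm hv.2 ⟨0, by omega⟩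
        obtain ⟨x', y', hxy', heq'⟩ := hv.2
        -- direct: use getElem
        have h1 : (List.ofFn v)[(0 : ℕ)]'(by simp; omega) = v ⟨0, by omega⟩ := by simp
        rw [List.getElem_of_eq heq (by simp; omega)] at h1
        rw [← h1, altL_getElem _ _ _ _ (by simp; omega)]
        norm_num
      have h1 : v ⟨1, by omega⟩ = y := by
        have h1 : (List.ofFn v)[(1 : ℕ)]'(by simp; omega) = v ⟨1, by omega⟩ := by simp
        rw [List.getElem_of_eq heq (by simp; omega)] at h1
        rw [← h1, altL_getElem _ _ _ _ (by simp; omega)]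
        norm_num
      simp only [Finset.mem_coe, Finset.mem_filter, Finset.mem_univ, true_and]
      rw [h0, h1]
      exact hxy
    · intro v hv v' hv' hfv
      have hv2 : IsAlt (List.ofFn v) := by
        have := hv; simp only [haltS, Finset.coe_filter, Set.mem_setOf_eq] at this
        exact this.2
      have hv2' : IsAlt (List.ofFn v') := by
        have := hv'; simp only [haltS, Finset.coe_filter, Set.mem_setOf_eq] at this
        exact this.2
      simp only [Prod.mk.injEq] at hfv
      funext i
      rw [isAlt_ofFn_eq hm hv2 i, isAlt_ofFn_eq hm hv2' i, hfv.1, hfv.2]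
  -- the distinct-pair set has exactly Q * (Q - 1) elements
  have hpairs : ((Finset.univ : Finset (α × α)).filter fun p => p.1 ≠ p.2).card
      = Q * (Q - 1) := by
    have hd : ((Finset.univ : Finset (α × α)).filter fun p => p.1 = p.2).card = Q := by
      have himg : (Finset.univ : Finset (α × α)).filter (fun p => p.1 = p.2)
          = Finset.univ.image (fun x : α => (x, x)) := by
        ext ⟨x, y⟩
        simp only [Finset.mem_filter, Finset.mem_univ, true_and, Finset.mem_image,
          Prod.mk.injEq]
        constructor
        · rintro rfl; exact ⟨x, rfl, rfl⟩
        · rintro ⟨z, rfl, rfl⟩; rfl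
      rw [himg, Finset.card_image_of_injective _ (fun x y h => (Prod.mk.injEq _ _ _ _ ▸ h).1),
        Finset.card_univ]
    have hcards : ((Finset.univ : Finset (α × α)).filter fun p => p.1 = p.2).card
        + ((Finset.univ : Finset (α × α)).filter fun p => ¬ p.1 = p.2).card
        = Q * Q := by
      rw [Finset.card_filter_add_card_filter_not, Finset.card_univ,
        Fintype.card_prod]
    have hQQ : Q * (Q - 1) = Q * Q - Q := by
      cases Q with
      | zero => simp
      | succ n => rw [Nat.succ_sub_one, Nat.mul_succ, Nat.add_sub_cancel]
    simp only [ne_eq]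
    omega
  omega



section Encode

variable {k s : ℕ}

/-- Index type for the injection. -/
abbrev TIdx (k s : ℕ) : Type :=
  ((c : Fin (s+1) → ℕ) × (∀ j, Fin (c j) → Fin (k+2))) × Finset (Fin s) × (Fin s → Fin (k+1))

def blkT (t : TIdx k s) (j : Fin (s+1)) : List (Fin (k+2)) := List.ofFn (t.1.2 j)

def symT (t : TIdx k s) (i : Fin s) : Fin (k+2) :=
  ((blkT t i.succ).headI).succAbove (t.2.2 i)

def itemsT (t : TIdx k s) : List (Item (Fin (k+2))) :=
  List.ofFn (fun i : Fin s => ((blkT t i.castSucc, decide (i ∈ t.2.1), symT t i) : Item (Fin (k+2))))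

def phiT (t : TIdx k s) : List (Fin (k+2)) × List (Fin (k+2)) :=
  buildP (itemsT t) (blkT t (Fin.last s))

def idxSet (k s l a : ℕ) : Finset (TIdx k s) :=
  ((compSet (s+1) l 2).sigma fun c => Fintype.piFinset fun j => goodVec (Fin (k+2)) (c j)) ×ˢ
    ((Finset.powersetCard a Finset.univ) ×ˢ Finset.univ)

lemma mem_idxSet {t : TIdx k s} {l a : ℕ} (ht : t ∈ idxSet k s l a) :
    (∑ j, t.1.1 j = l) ∧ (∀ j, 2 ≤ t.1.1 j) ∧
    (∀ j, ¬ IsAlt (List.ofFn (t.1.2 j))) ∧ t.2.1.card = a := by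
  rw [idxSet, Finset.mem_product, Finset.mem_sigma, Finset.mem_product] at ht
  obtain ⟨⟨hc, hw⟩, hA, -⟩ := ht
  rw [compSet, Finset.mem_filter, Finset.Nat.mem_antidiagonalTuple] at hc
  rw [Fintype.mem_piFinset] at hw
  refine ⟨hc.1, hc.2, fun j => ?_, (Finset.mem_powersetCard.mp hA).2⟩
  have := hw j
  rw [goodVec, Finset.mem_filter] at this
  exact this.2

lemma validP_itemsT {t : TIdx k s} {l a : ℕ} (ht : t ∈ idxSet k s l a) :
    ValidP (itemsT t) (blkT t (Fin.last s)) := by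
  obtain ⟨hsum, hge, halt, hcard⟩ := mem_idxSet ht
  apply validP_encode s (blkT t) (fun i => decide (i ∈ t.2.1)) (symT t)
  · intro j
    constructor
    · rw [blkT, List.length_ofFn]; exact hge j
    · exact halt j
  · intro i
    exact Fin.succAbove_ne _ _

lemma zOf_itemsT_length {t : TIdx k s} {l a : ℕ} (ht : t ∈ idxSet k s l a) :
    (zOf (itemsT t) (blkT t (Fin.last s))).length = l := by
  obtain ⟨hsum, hge, halt, hcard⟩ := mem_idxSet ht
  rw [zOf_length, itemsT, List.map_ofFn, List.sum_ofFn]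
  simp only [Function.comp]
  rw [blkT, List.length_ofFn]
  calc (∑ i : Fin s, (blkT t i.castSucc).length) + t.1.1 (Fin.last s)
      = (∑ i : Fin s, t.1.1 i.castSucc) + t.1.1 (Fin.last s) := by
        congr 1
        apply Finset.sum_congr rfl
        intro i _
        rw [blkT, List.length_ofFn]
    _ = ∑ j, t.1.1 j := (Fin.sum_univ_castSucc _).symm
    _ = l := hsum

lemma countP_itemsT_true {t : TIdx k s} {l a : ℕ} (ht : t ∈ idxSet k s l a) :
    (itemsT t).countP (fun it => it.2.1) = a := by
  obtain ⟨hsum, hge, halt, hcard⟩ := mem_idxSet ht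
  rw [itemsT, countP_ofFn]
  have : ∀ i : Fin s, (if (decide (i ∈ t.2.1) : Bool) then (1:ℕ) else 0)
      = if i ∈ t.2.1 then 1 else 0 := by
    intro i; by_cases h : i ∈ t.2.1 <;> simp [h]
  rw [Finset.sum_congr rfl (fun i _ => this i)]
  rw [Finset.sum_ite_mem, Finset.univ_inter, Finset.sum_const, smul_eq_mul, mul_one]
  exact hcard

lemma countP_itemsT_false {t : TIdx k s} {l a : ℕ} (ht : t ∈ idxSet k s l a) (ha : a ≤ s) :
    (itemsT t).countP (fun it => !it.2.1) = s - a := by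
  have htrue := countP_itemsT_true ht
  have hlen : (itemsT t).length = s := by rw [itemsT, List.length_ofFn]
  have h : (itemsT t).length = (itemsT t).countP (fun it => it.2.1)
      + (itemsT t).countP (fun it => !it.2.1) := by
    rw [List.length_eq_countP_add_countP (p := fun (it : Item (Fin (k+2))) => it.2.1)]
    congr 1
    apply List.countP_congr
    intro x _
    by_cases hb : x.2.1 <;> simp [hb]
  omega

lemma phiT_mem_edgeSet {t : TIdx k s} {l a b : ℕ} (hs : s = a + b)
    (ht : t ∈ idxSet k s l a) : phiT t ∈ edgeSet (k+2) l a b := by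
  obtain ⟨hsum, hge, halt, hcard⟩ := mem_idxSet ht
  have ha : a ≤ s := by omega
  refine ⟨?_, ?_, zOf (itemsT t) (blkT t (Fin.last s)), zOf_itemsT_length ht,
    zOf_sublist_fst _ _, zOf_sublist_snd _ _⟩
  · rw [phiT, buildP_fst_length, zOf_itemsT_length ht, countP_itemsT_true ht]
  · rw [phiT, buildP_snd_length, zOf_itemsT_length ht, countP_itemsT_false ht ha]
    omega

lemma phiT_injOn (l a : ℕ) : Set.InjOn (phiT : TIdx k s → _) (idxSet k s l a) := by
  rintro ⟨⟨c, w⟩, A, e⟩ ht ⟨⟨c', w'⟩, A', e'⟩ ht' hφ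
  rw [Finset.mem_coe] at ht ht'
  have hv := validP_itemsT ht
  have hv' := validP_itemsT ht'
  obtain ⟨hitems, hwl⟩ := buildP_inj _ _ _ _ hv hv' hφ
  -- extract pointwise equalities of items
  have hfn := List.ofFn_injective hitems
  have hpt : ∀ i : Fin s,
      (blkT (⟨⟨c, w⟩, A, e⟩ : TIdx k s) i.castSucc = blkT (⟨⟨c', w'⟩, A', e'⟩ : TIdx k s) i.castSucc) ∧
      (decide (i ∈ A) = decide (i ∈ A')) ∧
      (symT (⟨⟨c, w⟩, A, e⟩ : TIdx k s) i = symT (⟨⟨c', w'⟩, A', e'⟩ : TIdx k s) i) := by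
    intro i
    have := congrFun hfn i
    simpa [Prod.mk.injEq] using this
  -- the composition vectors agree
  have hc : c = c' := by
    funext j
    induction j using Fin.lastCases with
    | last =>
      have := congrArg List.length hwl
      simpa [blkT] using this
    | cast i =>
      have := congrArg List.length (hpt i).1
      simpa [blkT] using this
  subst hc
  -- the blocks agree
  have hw : w = w' := by
    funext j
    induction j using Fin.lastCases with
    | last => exact List.ofFn_injective hwl
    | cast i => exact List.ofFn_injective (hpt i).1
  subst hw
  -- the gap sets agree
  have hA : A = A' := by
    ext i
    have := (hpt i).2.1
    simpa using this
  subst hA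
  -- the inserted symbols agree
  have he : e = e' := by
    funext i
    have := (hpt i).2.2
    rw [symT, symT] at this
    exact Fin.succAbove_right_injective this
  subst he
  rfl

lemma card_idxSet (l a : ℕ) :
    (idxSet k s l a).card =
      (∑ c ∈ compSet (s+1) l 2, ∏ j, (goodVec (Fin (k+2)) (c j)).card) *
        (s.choose a * (k+1) ^ s) := by
  rw [idxSet, Finset.card_product, Finset.card_product, Finset.card_sigma]
  congr 1
  · apply Finset.sum_congr rfl
    intro c _
    rw [Fintype.card_piFinset]
  · rw [Finset.card_powersetCard, Finset.card_univ, Fintype.card_fin, Finset.card_univ]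
    congr 1
    rw [Fintype.card_fun, Fintype.card_fin, Fintype.card_fin]

end Encode

end Stmt5

/-- with s = a + b,
|E(B_{q,l,a,b})| ≥ C(s, a) · (q-1)^s · ∑_{c ∈ M(s+1, l, 2)} ∏_{i=0}^{s} (q^{c_i} - q(q-1)). -/
theorem stmt_5 (q l a b : ℕ) (hq : 2 ≤ q) :
    (a + b).choose a * (q - 1) ^ (a + b) *
        ∑ c ∈ compSet (a + b + 1) l 2, ∏ i, (q ^ c i - q * (q - 1)) ≤
      (edgeSet q l a b).ncard := by
  obtain ⟨k, rfl⟩ : ∃ k, q = k + 2 := ⟨q - 2, by omega⟩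
  set s := a + b with hs
  -- finiteness of the edge set
  have hfin : (edgeSet (k+2) l a b).Finite := by
    apply Set.Finite.subset
      (Set.Finite.prod (List.finite_length_eq (Fin (k+2)) (l+a))
        (List.finite_length_eq (Fin (k+2)) (l+b)))
    intro p hp
    exact ⟨hp.1, hp.2.1⟩
  -- the injection
  have hinj := Stmt5.phiT_injOn (k := k) (s := s) l a
  have hsub : ↑((Stmt5.idxSet k s l a).image Stmt5.phiT) ⊆ edgeSet (k+2) l a b := by
    intro p hp
    rw [Finset.coe_image, Set.mem_image] at hp
    obtain ⟨t, ht, rfl⟩ := hp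
    exact Stmt5.phiT_mem_edgeSet hs ht
  have hchain : ((Stmt5.idxSet k s l a).card : ℕ) ≤ (edgeSet (k+2) l a b).ncard := by
    calc (Stmt5.idxSet k s l a).card
        = ((Stmt5.idxSet k s l a).image Stmt5.phiT).card :=
          (Finset.card_image_of_injOn hinj).symm
      _ = (((Stmt5.idxSet k s l a).image Stmt5.phiT : Finset _) : Set _).ncard :=
          (Set.ncard_coe_finset _).symm
      _ ≤ (edgeSet (k+2) l a b).ncard := Set.ncard_le_ncard hsub hfin
  refine le_trans ?_ hchain
  rw [Stmt5.card_idxSet]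
  have hq1 : (k + 2) - 1 = k + 1 := by omega
  rw [hq1]
  rw [mul_comm]
  apply Nat.mul_le_mul
  · -- sum comparison
    apply Finset.sum_le_sum
    intro c hc
    apply Finset.prod_le_prod'
    intro j _
    have hge : 2 ≤ c j := by
      rw [compSet, Finset.mem_filter] at hc
      exact hc.2 j
    have := Stmt5.card_goodVec_ge (Fin (k+2)) (c j) hge
    rw [Fintype.card_fin] at this
    calc (k+2) ^ c j - (k+2) * (k+1)
        = (k+2) ^ c j - (k+2) * ((k+2) - 1) := by rw [hq1]
      _ ≤ (Stmt5.goodVec (Fin (k+2)) (c j)).card := this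
  · exact le_refl _
end

section
/- Let q ≥ 2 and let x be a q-ary string of length n with exactly r runs, and suppose every alternating contiguous substring (infix) of x has length at most c. Then |S_{a,b}(x)| ≥ C(r - a - 2 - (a+1)c, a) · C(n - 2a - 1 - (2a+b+1)c, b) · (q-1)^b, where subtraction is truncated natural subtraction (so a binomial coefficient whose top argument would be negative is 0). -/
/-- The number of runs of a string: 1 plus the number of indices i < length - 1
with x_i ≠ x_{i+1}. -/
def numRuns {q : ℕ} (x : List (Fin q)) : ℕ :=
  1 + ((Finset.range (x.length - 1)).filter fun i => x[i]? ≠ x[i + 1]?).card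

/-- A string is alternating if there are u ≠ v with u at every even index and v at
every odd index. (For q ≥ 2, every string of length at most 1 is alternating.) -/
def IsAlternating {q : ℕ} (w : List (Fin q)) : Prop :=
  ∃ u v : Fin q, u ≠ v ∧ ∀ i < w.length, w[i]? = some (if i % 2 = 0 then u else v)

namespace S8
variable {q : ℕ}

/-- Apply an edit script (relative gap, action) to a string.
`(g, none)`: skip `g` chars then delete one; `(g, some s)`: skip `g` chars then insert `s`. -/
def app : List (Fin q) → List (ℕ × Option (Fin q)) → List (Fin q)
  | x, [] => x
  | x, (g, none) :: T => x.take g ++ app (x.drop (g+1)) T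
  | x, (g, some s) :: T => x.take g ++ s :: app (x.drop g) T

def gapLB (k : ℕ) : List (ℕ × Option (Fin q)) → Prop
  | [] => True
  | (g, _) :: _ => k ≤ g

def Ok (c : ℕ) : List (Fin q) → List (ℕ × Option (Fin q)) → Prop
  | _, [] => True
  | x, (g, none) :: T =>
      g + c + 2 ≤ x.length ∧ x[g]? ≠ x[g+1]? ∧ gapLB (c+1) T ∧ Ok c (x.drop (g+1)) T
  | x, (g, some s) :: T =>
      g + c + 2 ≤ x.length ∧ x[g]? ≠ some s ∧ gapLB (c+1) T ∧ Ok c (x.drop g) T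

lemma app_agree {c : ℕ} {u : List (Fin q)} {T} (hOk : Ok c u T) (hgap : gapLB (c+1) T)
    {i : ℕ} (hi : i ≤ c) (hiu : i < u.length) : (app u T)[i]? = u[i]? := by
  match T with
  | [] => rfl
  | (g, none) :: T =>
    obtain ⟨h1, _, _, _⟩ := hOk
    have hg : c + 1 ≤ g := hgap
    rw [app, List.getElem?_append, List.length_take]
    rw [if_pos (by omega), List.getElem?_take, if_pos (by omega)]
  | (g, some s) :: T =>
    obtain ⟨h1, _, _, _⟩ := hOk
    have hg : c + 1 ≤ g := hgap
    rw [app, List.getElem?_append, List.length_take]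
    rw [if_pos (by omega), List.getElem?_take, if_pos (by omega)]

/-- the element of `app x P` at the first action position differs from `x` there. -/
lemma app_head_ne {c g : ℕ} {x : List (Fin q)} {o T} (hOk : Ok c x ((g, o) :: T)) :
    (app x ((g, o) :: T))[g]? ≠ x[g]? := by
  match o with
  | none =>
    obtain ⟨h1, h2, h3, h4⟩ := hOk
    rw [app, List.getElem?_append, List.length_take, if_neg (by omega)]
    have : (min g x.length) = g := by omega
    rw [this, Nat.sub_self]
    rw [app_agree h4 h3 (Nat.zero_le c) (by simp; omega)]
    rw [List.getElem?_drop]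
    simpa using fun h => h2 h.symm
  | some s =>
    obtain ⟨h1, h2, _, _⟩ := hOk
    rw [app, List.getElem?_append, List.length_take, if_neg (by omega)]
    have : (min g x.length) = g := by omega
    rw [this, Nat.sub_self]
    simpa using fun h => h2 h.symm

lemma app_frame {g : ℕ} {x : List (Fin q)} {o T} {i : ℕ} (hi : i < g) (hg : g ≤ x.length) :
    (app x ((g, o) :: T))[i]? = x[i]? := by
  match o with
  | none =>
    rw [app, List.getElem?_append, List.length_take, if_pos (by omega),
      List.getElem?_take, if_pos hi]
  | some s =>
    rw [app, List.getElem?_append, List.length_take, if_pos (by omega),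
      List.getElem?_take, if_pos hi]

end S8

namespace S8
variable {q : ℕ}

lemma Ok_bound {c g : ℕ} {x : List (Fin q)} {o T} (h : Ok c x ((g, o) :: T)) :
    g + c + 2 ≤ x.length := by cases o <;> exact h.1

lemma mixed_contra {c g : ℕ} {x : List (Fin q)} {s : Fin q} {T T'}
    (Hc : ∀ w : List (Fin q), w.IsInfix x → IsAlternating w → w.length ≤ c)
    (h1 : Ok c x ((g, some s) :: T)) (h2 : Ok c x ((g, none) :: T'))
    (he : app x ((g, some s) :: T) = app x ((g, none) :: T')) : False := by
  obtain ⟨hb, hnes, hgT, hOkT⟩ := h1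
  obtain ⟨hb', hne, hgT', hOkT'⟩ := h2
  simp only [app] at he
  have he' := List.append_cancel_left he
  have hlen : g + c + 2 ≤ x.length := hb
  have hldrop : (x.drop g).length = x.length - g := by simp
  have hldrop' : (x.drop (g+1)).length = x.length - (g+1) := by simp
  have hrel : ∀ j, j + 2 ≤ c + 1 → x[g + j]? = x[g + j + 2]? := by
    intro j hj
    have e := congrArg (fun l => l[j+1]?) he'
    rw [List.getElem?_cons_succ] at e
    rw [app_agree hOkT hgT (by omega) (by omega)] at e
    rw [app_agree hOkT' hgT' (by omega) (by omega)] at e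
    rw [List.getElem?_drop, List.getElem?_drop] at e
    rw [show g + j = g + j from rfl] at e
    convert e using 2 <;> omega
  have hg0 : g < x.length := by omega
  have hg1 : g + 1 < x.length := by omega
  have hne01 : x[g] ≠ x[g+1] := by
    intro h
    apply hne
    rw [List.getElem?_eq_getElem hg0, List.getElem?_eq_getElem hg1, h]
  have claim : ∀ j, j ≤ c + 1 → x[g + j]? = some (if j % 2 = 0 then x[g] else x[g+1]) := by
    intro j
    induction j using Nat.strong_induction_on with
    | _ j ih =>
      intro hj
      match j, hj with
      | 0, _ => simp [List.getElem?_eq_getElem hg0]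
      | 1, _ => simp [List.getElem?_eq_getElem hg1]
      | (j+2), hj =>
        have e1 : g + j + 2 = g + (j + 2) := by omega
        rw [← e1, ← hrel j (by omega), ih j (by omega) (by omega)]
        have e2 : (j + 2) % 2 = j % 2 := by omega
        rw [e2]
  have halt : IsAlternating ((x.drop g).take (c+2)) := by
    refine ⟨x[g], x[g+1], hne01, fun i hi => ?_⟩
    rw [List.length_take] at hi
    rw [List.getElem?_take, if_pos (by omega), List.getElem?_drop]
    exact claim i (by omega)
  have hinf : ((x.drop g).take (c+2)).IsInfix x :=
    (List.take_prefix _ _).isInfix.trans (List.drop_suffix g x).isInfix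
  have := Hc _ hinf halt
  rw [List.length_take] at this
  omega

lemma app_cons_some_getElem {g : ℕ} {x : List (Fin q)} {s T} (hg : g ≤ x.length) :
    (app x ((g, some s) :: T))[g]? = some s := by
  rw [app, List.getElem?_append, List.length_take, if_neg (by omega)]
  have h : min g x.length = g := by omega
  rw [h, Nat.sub_self]
  simp

theorem app_inj {c : ℕ} (P : List (ℕ × Option (Fin q))) : ∀ {x : List (Fin q)}
    {P' : List (ℕ × Option (Fin q))},
    (∀ w : List (Fin q), w.IsInfix x → IsAlternating w → w.length ≤ c) →
    Ok c x P → Ok c x P' → app x P = app x P' → P = P' := by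
  induction P with
  | nil =>
    intro x P' Hc h1 h2 he
    cases P' with
    | nil => rfl
    | cons hd' T' =>
      obtain ⟨g', o'⟩ := hd'
      exfalso
      exact app_head_ne h2 (by rw [← he]; rfl)
  | cons hd T ih =>
    intro x P' Hc h1 h2 he
    obtain ⟨g, o⟩ := hd
    cases P' with
    | nil =>
      exfalso
      exact app_head_ne h1 (by rw [he]; rfl)
    | cons hd' T' =>
      obtain ⟨g', o'⟩ := hd'
      have hb := Ok_bound h1
      have hb' := Ok_bound h2
      have Hc' : ∀ k, ∀ w : List (Fin q), w.IsInfix (x.drop k) → IsAlternating w →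
          w.length ≤ c := fun k w hw ha => Hc w (hw.trans (List.drop_suffix k x).isInfix) ha
      rcases lt_trichotomy g g' with hlt | heq | hgt
      · exfalso
        apply app_head_ne h1
        rw [he, app_frame hlt (by omega)]
      · subst heq
        match o, o' with
        | none, none =>
          obtain ⟨_, _, _, hT⟩ := h1
          obtain ⟨_, _, _, hT'⟩ := h2
          simp only [app] at he
          have := ih (Hc' (g+1)) hT hT' (List.append_cancel_left he)
          rw [this]
        | none, some s' => exact absurd he.symm (fun h => mixed_contra Hc h2 h1 h)
        | some s, none => exact absurd he (fun h => mixed_contra Hc h1 h2 h)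
        | some s, some s' =>
          obtain ⟨_, _, _, hT⟩ := h1
          obtain ⟨_, _, _, hT'⟩ := h2
          have hss : s = s' := by
            have e := congrArg (fun l => l[g]?) he
            rw [app_cons_some_getElem (by omega), app_cons_some_getElem (by omega)] at e
            exact Option.some_injective _ e
          subst hss
          simp only [app] at he
          have he2 := (List.cons_injective.eq_iff.mp (List.append_cancel_left he))
          have := ih (Hc' g) hT hT' he2
          rw [this]
      · exfalso
        apply app_head_ne h2
        rw [← he, app_frame hgt (by omega)]

end S8

namespace S8
variable {q : ℕ}

def delCount (P : List (ℕ × Option (Fin q))) : ℕ := P.countP (fun u => u.2.isNone)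
def insCount (P : List (ℕ × Option (Fin q))) : ℕ := P.countP (fun u => u.2.isSome)

lemma drop_succ_sublist_drop {x : List (Fin q)} {g : ℕ} (hg : g < x.length) :
    (x.drop (g+1)).Sublist (x.drop g) := by
  rw [← List.getElem_cons_drop hg]
  exact (List.Sublist.refl _).cons _

@[simp] lemma delCount_cons_none {g : ℕ} {T : List (ℕ × Option (Fin q))} :
    delCount ((g, (none : Option (Fin q))) :: T) = delCount T + 1 := by
  simp [delCount, List.countP_cons]
@[simp] lemma delCount_cons_some {g : ℕ} {s : Fin q} {T : List (ℕ × Option (Fin q))} :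
    delCount ((g, some s) :: T) = delCount T := by
  simp [delCount, List.countP_cons]
@[simp] lemma insCount_cons_none {g : ℕ} {T : List (ℕ × Option (Fin q))} :
    insCount ((g, (none : Option (Fin q))) :: T) = insCount T := by
  simp [insCount, List.countP_cons]
@[simp] lemma insCount_cons_some {g : ℕ} {s : Fin q} {T : List (ℕ × Option (Fin q))} :
    insCount ((g, some s) :: T) = insCount T + 1 := by
  simp [insCount, List.countP_cons]

lemma app_length {c : ℕ} (P : List (ℕ × Option (Fin q))) : ∀ {x : List (Fin q)},
    Ok c x P → (app x P).length + delCount P = x.length + insCount P := by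
  induction P with
  | nil => intro x _; simp [app, delCount, insCount]
  | cons hd T ih =>
    intro x h
    obtain ⟨g, o⟩ := hd
    match o with
    | none =>
      obtain ⟨h1, _, _, h4⟩ := h
      have hih := ih h4
      have htk : (List.take g x).length = g := by rw [List.length_take]; omega
      have hdr : (List.drop (g+1) x).length = x.length - (g+1) := List.length_drop
      rw [app, delCount_cons_none, insCount_cons_none, List.length_append, htk]
      omega
    | some s =>
      obtain ⟨h1, _, _, h4⟩ := h
      have hih := ih h4
      have htk : (List.take g x).length = g := by rw [List.length_take]; omega
      have hdr : (List.drop g x).length = x.length - g := List.length_drop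
      rw [app, delCount_cons_some, insCount_cons_some, List.length_append, List.length_cons, htk]
      omega

lemma exists_common {c : ℕ} (P : List (ℕ × Option (Fin q))) : ∀ {x : List (Fin q)},
    Ok c x P → ∃ z : List (Fin q),
      z.length + delCount P = x.length ∧ z.Sublist x ∧ z.Sublist (app x P) := by
  induction P with
  | nil => intro x _; exact ⟨x, by simp [delCount], List.Sublist.refl x, List.Sublist.refl x⟩
  | cons hd T ih =>
    intro x h
    obtain ⟨g, o⟩ := hd
    match o with
    | none =>
      obtain ⟨h1, _, _, h4⟩ := h
      obtain ⟨z', hz1, hz2, hz3⟩ := ih h4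
      have htk : (List.take g x).length = g := by rw [List.length_take]; omega
      have hdr : (List.drop (g+1) x).length = x.length - (g+1) := List.length_drop
      refine ⟨x.take g ++ z', ?_, ?_, ?_⟩
      · rw [delCount_cons_none, List.length_append, htk]
        omega
      · conv_rhs => rw [← List.take_append_drop g x]
        exact List.Sublist.append (List.Sublist.refl _)
          (hz2.trans (drop_succ_sublist_drop (by omega)))
      · rw [app]
        exact List.Sublist.append (List.Sublist.refl _) hz3
    | some s =>
      obtain ⟨h1, _, _, h4⟩ := h
      obtain ⟨z', hz1, hz2, hz3⟩ := ih h4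
      have htk : (List.take g x).length = g := by rw [List.length_take]; omega
      have hdr : (List.drop g x).length = x.length - g := List.length_drop
      refine ⟨x.take g ++ z', ?_, ?_, ?_⟩
      · rw [delCount_cons_some, List.length_append, htk]
        omega
      · conv_rhs => rw [← List.take_append_drop g x]
        exact List.Sublist.append (List.Sublist.refl _) hz2
      · rw [app]
        exact List.Sublist.append (List.Sublist.refl _) (hz3.cons s)

end S8

namespace S8
variable {q : ℕ}

def cost (u : ℕ × Option (Fin q)) : ℕ := if u.2.isNone then 1 else 0

def Rel (c : ℕ) (u v : ℕ × Option (Fin q)) : Prop := u.1 + cost u + (c+1) ≤ v.1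

def toScript : ℕ → List (ℕ × Option (Fin q)) → List (ℕ × Option (Fin q))
  | _, [] => []
  | base, (p, none) :: t => (p - base, none) :: toScript (p+1) t
  | base, (p, some s) :: t => (p - base, some s) :: toScript p t

lemma chain_bound {c : ℕ} (L : List (ℕ × Option (Fin q))) :
    ∀ hd, List.Chain' (Rel c) (hd :: L) → ∀ u ∈ L, hd.1 + cost hd + (c+1) ≤ u.1 := by
  induction L with
  | nil => intro hd _ u hu; simp at hu
  | cons v t ih =>
    intro hd hch u hu
    have h1 : Rel c hd v := List.isChain_cons_cons.mp hch |>.1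
    have h2 := List.isChain_cons_cons.mp hch |>.2
    rcases List.mem_cons.mp hu with rfl | hu
    · exact h1
    · have := ih v h2 u hu
      have hc : 0 ≤ cost v := Nat.zero_le _
      unfold Rel at *
      omega

lemma Ok_toScript {c : ℕ} {x : List (Fin q)} (L : List (ℕ × Option (Fin q))) : ∀ base,
    (∀ u ∈ L, base ≤ u.1) →
    (∀ u ∈ L, u.1 + c + 2 ≤ x.length) →
    (∀ u ∈ L, u.2 = none → x[u.1]? ≠ x[u.1 + 1]?) →
    (∀ u ∈ L, ∀ s, u.2 = some s → x[u.1]? ≠ some s) →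
    List.Chain' (Rel c) L →
    Ok c (x.drop base) (toScript base L) := by
  induction L with
  | nil => intro base _ _ _ _ _; trivial
  | cons hd t ih =>
    intro base hbase hbnd hdel hins hch
    obtain ⟨p, o⟩ := hd
    have hb : base ≤ p := hbase _ (List.mem_cons_self)
    have hx : p + c + 2 ≤ x.length := hbnd _ (List.mem_cons_self)
    have htail := chain_bound t (p, o) hch
    have hch' := List.IsChain.tail hch
    match o with
    | none =>
      rw [toScript]
      refine ⟨by simp [List.length_drop]; omega, ?_, ?_, ?_⟩
      · rw [List.getElem?_drop, List.getElem?_drop]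
        have e1 : base + (p - base) = p := by omega
        have e2 : base + (p - base + 1) = p + 1 := by omega
        rw [e1, e2]
        exact hdel _ (List.mem_cons_self) rfl
      · cases t with
        | nil => rw [toScript]; trivial
        | cons v t' =>
          have := htail v (List.mem_cons_self)
          simp only [cost, Option.isNone_none, if_pos] at this
          obtain ⟨p', o'⟩ := v
          cases o' <;> (rw [toScript]; show _ ≤ _; omega)
      · rw [List.drop_drop]
        rw [show base + (p - base + 1) = p + 1 by omega]
        refine ih (p+1) (fun u hu => ?_) (fun u hu => hbnd u (List.mem_cons_of_mem _ hu))
          (fun u hu => hdel u (List.mem_cons_of_mem _ hu))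
          (fun u hu => hins u (List.mem_cons_of_mem _ hu)) hch'
        have := htail u hu
        simp only [cost, Option.isNone_none, if_pos] at this
        omega
    | some s =>
      rw [toScript]
      refine ⟨by simp [List.length_drop]; omega, ?_, ?_, ?_⟩
      · rw [List.getElem?_drop]
        have e1 : base + (p - base) = p := by omega
        rw [e1]
        exact hins _ (List.mem_cons_self) s rfl
      · cases t with
        | nil => rw [toScript]; trivial
        | cons v t' =>
          have := htail v (List.mem_cons_self)
          simp only [cost, Option.isNone_some, if_neg] at this
          obtain ⟨p', o'⟩ := v
          cases o' <;> (rw [toScript]; show _ ≤ _; simp [cost] at this; omega)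
      · rw [List.drop_drop]
        rw [show base + (p - base) = p by omega]
        refine ih p (fun u hu => ?_) (fun u hu => hbnd u (List.mem_cons_of_mem _ hu))
          (fun u hu => hdel u (List.mem_cons_of_mem _ hu))
          (fun u hu => hins u (List.mem_cons_of_mem _ hu)) hch'
        have := htail u hu
        omega

lemma toScript_inj : ∀ (L : List (ℕ × Option (Fin q))) (L' : List (ℕ × Option (Fin q)))
    (base : ℕ), (∀ u ∈ L, base ≤ u.1) → (∀ u ∈ L', base ≤ u.1) →
    List.Pairwise (fun u v => u.1 < v.1) L → List.Pairwise (fun u v => u.1 < v.1) L' →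
    toScript base L = toScript base L' → L = L' := by
  intro L
  induction L with
  | nil =>
    intro L' base _ _ _ _ he
    cases L' with
    | nil => rfl
    | cons v t' =>
      obtain ⟨p', o'⟩ := v
      exfalso
      cases o' <;> (rw [toScript, toScript] at he; simp at he)
  | cons u t ih =>
    intro L' base hb hb' hp hp' he
    obtain ⟨p, o⟩ := u
    cases L' with
    | nil =>
      exfalso
      cases o <;> (rw [toScript, toScript] at he; simp at he)
    | cons v t' =>
      obtain ⟨p', o'⟩ := v
      have hbp : base ≤ p := hb _ (List.mem_cons_self)
      have hbp' : base ≤ p' := hb' _ (List.mem_cons_self)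
      match o, o' with
      | none, none =>
        rw [toScript, toScript] at he
        obtain ⟨he1, he2⟩ := List.cons_eq_cons.mp he
        have hpp : p = p' := by
          have := (Prod.mk.injEq _ _ _ _).mp he1 |>.1
          omega
        subst hpp
        have := ih t' (p+1) (fun w hw => (List.pairwise_cons.mp hp).1 w hw)
          (fun w hw => (List.pairwise_cons.mp hp').1 w hw)
          (List.pairwise_cons.mp hp).2 (List.pairwise_cons.mp hp').2 he2
        rw [this]
      | none, some s' =>
        rw [toScript, toScript] at he
        exfalso
        have := (Prod.mk.injEq _ _ _ _).mp (List.cons_eq_cons.mp he).1 |>.2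
        simp at this
      | some s, none =>
        rw [toScript, toScript] at he
        exfalso
        have := (Prod.mk.injEq _ _ _ _).mp (List.cons_eq_cons.mp he).1 |>.2
        simp at this
      | some s, some s' =>
        rw [toScript, toScript] at he
        obtain ⟨he1, he2⟩ := List.cons_eq_cons.mp he
        obtain ⟨he11, he12⟩ := (Prod.mk.injEq _ _ _ _).mp he1
        have hpp : p = p' := by omega
        subst hpp
        rw [he12] at *
        have := ih t' p (fun w hw => le_of_lt ((List.pairwise_cons.mp hp).1 w hw))
          (fun w hw => le_of_lt ((List.pairwise_cons.mp hp').1 w hw))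
          (List.pairwise_cons.mp hp).2 (List.pairwise_cons.mp hp').2 he2
        rw [this]

lemma toScript_delCount : ∀ (L : List (ℕ × Option (Fin q))) base,
    delCount (toScript base L) = delCount L := by
  intro L
  induction L with
  | nil => intro base; rfl
  | cons u t ih =>
    intro base
    obtain ⟨p, o⟩ := u
    cases o <;> simp [toScript, ih]

lemma toScript_insCount : ∀ (L : List (ℕ × Option (Fin q))) base,
    insCount (toScript base L) = insCount L := by
  intro L
  induction L with
  | nil => intro base; rfl
  | cons u t ih =>
    intro base
    obtain ⟨p, o⟩ := u
    cases o <;> simp [toScript, ih]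

end S8

namespace S8

def shiftZ (c : ℕ) : List ℕ → ℕ → ℕ
  | [], v => v
  | p :: ps, v => if p ≤ v + c then shiftZ c ps (v + (2*c+2)) else shiftZ c ps v

lemma shiftZ_ge (c : ℕ) : ∀ (ps : List ℕ) (v : ℕ), v ≤ shiftZ c ps v := by
  intro ps
  induction ps with
  | nil => intro v; simp [shiftZ]
  | cons p ps ih =>
    intro v
    rw [shiftZ]
    split
    · exact le_trans (by omega) (ih (v + (2*c+2)))
    · exact ih v

lemma shiftZ_le (c : ℕ) : ∀ (ps : List ℕ) (v : ℕ),
    shiftZ c ps v ≤ v + (2*c+2) * ps.length := by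
  intro ps
  induction ps with
  | nil => intro v; simp [shiftZ]
  | cons p ps ih =>
    intro v
    rw [shiftZ]
    have h1 := ih (v + (2*c+2))
    have h2 := ih v
    have : (2*c+2) * (p :: ps).length = (2*c+2) * ps.length + (2*c+2) := by
      simp [List.length_cons]; ring
    split <;> omega

lemma shiftZ_gap (c : ℕ) : ∀ (ps : List ℕ) (v v' : ℕ), v ≤ v' →
    shiftZ c ps v + (v' - v) ≤ shiftZ c ps v' := by
  intro ps
  induction ps with
  | nil => intro v v' h; simp [shiftZ]; omega
  | cons p ps ih =>
    intro v v' h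
    rw [shiftZ, shiftZ]
    by_cases h1 : p ≤ v + c
    · rw [if_pos h1, if_pos (by omega)]
      have := ih (v + (2*c+2)) (v' + (2*c+2)) (by omega)
      omega
    · rw [if_neg h1]
      split
      · have := ih v (v' + (2*c+2)) (by omega)
        omega
      · exact ih v v' h

lemma shiftZ_eq_or (c : ℕ) : ∀ (ps : List ℕ) (v : ℕ),
    shiftZ c ps v = v ∨ ∃ p ∈ ps, p + c + 2 ≤ shiftZ c ps v := by
  intro ps
  induction ps with
  | nil => intro v; left; rfl
  | cons p ps ih =>
    intro v
    rw [shiftZ]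
    by_cases h1 : p ≤ v + c
    · rw [if_pos h1]
      right
      exact ⟨p, List.mem_cons_self, le_trans (by omega) (shiftZ_ge c ps (v + (2*c+2)))⟩
    · rw [if_neg h1]
      rcases ih v with h | ⟨p', hp', h⟩
      · left; exact h
      · right; exact ⟨p', List.mem_cons_of_mem _ hp', h⟩

lemma shiftZ_zone (c : ℕ) : ∀ (ps : List ℕ) (v : ℕ), List.Pairwise (· ≤ ·) ps →
    ∀ p ∈ ps, shiftZ c ps v + c + 1 ≤ p ∨ p + c + 2 ≤ shiftZ c ps v := by
  intro ps
  induction ps with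
  | nil => intro v _ p hp; simp at hp
  | cons p0 ps ih =>
    intro v hpw p hp
    have hpw' := (List.pairwise_cons.mp hpw).2
    have hle := (List.pairwise_cons.mp hpw).1
    rw [shiftZ]
    by_cases h1 : p0 ≤ v + c
    · rw [if_pos h1]
      rcases List.mem_cons.mp hp with rfl | hp'
      · right
        exact le_trans (by omega) (shiftZ_ge c ps (v + (2*c+2)))
      · exact ih (v + (2*c+2)) hpw' p hp'
    · rw [if_neg h1]
      rcases List.mem_cons.mp hp with rfl | hp'
      · rcases shiftZ_eq_or c ps v with h | ⟨p', hp', h⟩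
        · left; omega
        · right
          have := hle p' hp'
          omega
      · exact ih v hpw' p hp'

lemma shiftZ_strictMono (c : ℕ) (ps : List ℕ) {v v' : ℕ} (h : v < v') :
    shiftZ c ps v < shiftZ c ps v' := by
  have := shiftZ_gap c ps v v' (le_of_lt h)
  omega

/-- the list of run boundaries of `x`. -/
def bdry (x : List (Fin q)) : List ℕ :=
  (List.range (x.length - 1)).filter (fun i => decide (x[i]? ≠ x[i+1]?))

lemma bdry_sorted (x : List (Fin q)) : List.Pairwise (· < ·) (bdry x) :=
  List.pairwise_lt_range.sublist List.filter_sublist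

lemma bdry_mem {x : List (Fin q)} {j : ℕ} (h : j ∈ bdry x) :
    j < x.length - 1 ∧ x[j]? ≠ x[j+1]? := by
  rw [bdry, List.mem_filter, List.mem_range] at h
  exact ⟨h.1, by simpa using h.2⟩

lemma bdry_length (x : List (Fin q)) : numRuns x = (bdry x).length + 1 := by
  rw [numRuns, bdry]
  rw [Nat.add_comm]
  congr 1

lemma sorted_lt_getElem_add (Q : List ℕ) (hQ : List.Pairwise (· < ·) Q)
    {i j : ℕ} (hij : i ≤ j) (hj : j < Q.length) :
    Q[i]'(by omega) + (j - i) ≤ Q[j]'hj := by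
  have hmem := List.pairwise_iff_getElem.mp hQ
  have key : ∀ k (hk : i + k < Q.length), Q[i]'(by omega) + k ≤ Q[i+k]'hk := by
    intro k
    induction k with
    | zero => intro hk; simp
    | succ m ihm =>
      intro hk
      have h1 := ihm (by omega)
      have h2 := hmem (i+m) (i+(m+1)) (by omega) (by omega) (by omega)
      omega
  obtain ⟨k, rfl⟩ : ∃ k, j = i + k := ⟨j - i, by omega⟩
  rw [show i + k - i = k by omega]
  exact key k hj

end S8

namespace S8
variable {q : ℕ}

lemma sorted_perm_eq : ∀ (l₁ l₂ : List (ℕ × Option (Fin q))), l₁.Perm l₂ →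
    List.Pairwise (fun u v => u.1 < v.1) l₁ → List.Pairwise (fun u v => u.1 < v.1) l₂ →
    l₁ = l₂ := by
  intro l₁
  induction l₁ with
  | nil => intro l₂ hp _ _; rw [hp.nil_eq]
  | cons u t ih =>
    intro l₂ hp h1 h2
    cases l₂ with
    | nil => exact absurd hp.symm (by simp)
    | cons v t₂ =>
      have huv : u = v := by
        have hu2 : u ∈ v :: t₂ := hp.mem_iff.mp (List.mem_cons_self)
        have hv1 : v ∈ u :: t := hp.mem_iff.mpr (List.mem_cons_self)
        rcases List.mem_cons.mp hu2 with h | hu2'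
        · exact h
        · exfalso
          have hvu : v.1 < u.1 := (List.pairwise_cons.mp h2).1 u hu2'
          rcases List.mem_cons.mp hv1 with h | hv1'
          · rw [h] at hvu; omega
          · have := (List.pairwise_cons.mp h1).1 v hv1'
            omega
      subst huv
      have := ih t₂ hp.cons_inv (List.pairwise_cons.mp h1).2 (List.pairwise_cons.mp h2).2
      rw [this]

lemma range_map_eq {β : Type*} {m : ℕ} {f g : ℕ → β}
    (h : (List.range m).map f = (List.range m).map g) : ∀ i < m, f i = g i := by
  intro i hi
  have := congrArg (fun l => l[i]?) h
  simpa [List.getElem?_map, List.getElem?_range hi] using this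

end S8

namespace S8
variable {k : ℕ}

def delP (x : List (Fin (k+2))) (c : ℕ) (sA : List ℕ) (i : ℕ) : ℕ :=
  (bdry x).getD (sA.getD i 0 + i * (c+1)) 0

def dels (x : List (Fin (k+2))) (c a : ℕ) (sA : List ℕ) : List ℕ :=
  (List.range a).map (delP x c sA)

def insP (c : ℕ) (dp : List ℕ) (sB : List ℕ) (i : ℕ) : ℕ :=
  shiftZ c dp (sB.getD i 0 + i * c)

def bigE (x : List (Fin (k+2))) (c a b : ℕ) (A B : Finset ℕ) (f : ℕ → Fin (k+1)) :
    List (ℕ × Option (Fin (k+2))) :=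
  ((dels x c a (A.sort (·≤·))).map (fun p => (p, (none : Option (Fin (k+2))))))
    ++ (List.range b).map (fun i =>
      (insP c (dels x c a (A.sort (·≤·))) (B.sort (·≤·)) i,
       some ((x.getD (insP c (dels x c a (A.sort (·≤·))) (B.sort (·≤·)) i) 0).succAbove (f i))))

def bigL (x : List (Fin (k+2))) (c a b : ℕ) (A B : Finset ℕ) (f : ℕ → Fin (k+1)) :
    List (ℕ × Option (Fin (k+2))) :=
  (bigE x c a b A B f).mergeSort (fun u v => decide (u.1 ≤ v.1))

def bigW (x : List (Fin (k+2))) (c a b : ℕ) (A B : Finset ℕ) (f : ℕ → Fin (k+1)) :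
    List (Fin (k+2)) :=
  app x (toScript 0 (bigL x c a b A B f))

end S8

namespace S8

lemma datum_facts (k c a b : ℕ) (x : List (Fin (k+2)))
    (h1 : a ≤ numRuns x - a - 2 - (a+1)*c)
    (h2 : b ≤ x.length - 2*a - 1 - (2*a+b+1)*c)
    (A B : Finset ℕ) (f : ℕ → Fin (k+1))
    (hA : A ⊆ Finset.range (numRuns x - a - 2 - (a+1)*c)) (hcA : A.card = a)
    (hB : B ⊆ Finset.range (x.length - 2*a - 1 - (2*a+b+1)*c)) (hcB : B.card = b) :
    List.Pairwise (fun u v => u.1 < v.1) (bigL x c a b A B f) ∧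
    Ok c x (toScript 0 (bigL x c a b A B f)) ∧
    delCount (bigL x c a b A B f) = a ∧ insCount (bigL x c a b A B f) = b ∧
    List.Pairwise (fun u v => u.1 < v.1)
      ((dels x c a (A.sort (·≤·))).map (fun p => (p, (none : Option (Fin (k+2)))))) ∧
    List.Pairwise (fun u v => u.1 < v.1)
      ((List.range b).map (fun i =>
        (insP c (dels x c a (A.sort (·≤·))) (B.sort (·≤·)) i,
         some ((x.getD (insP c (dels x c a (A.sort (·≤·))) (B.sort (·≤·)) i) 0).succAbove
           (f i))))) ∧
    (∀ i, i < a → (A.sort (·≤·)).getD i 0 + i*(c+1) < (bdry x).length) := by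
  set Q := bdry x with hQdef
  have hQs : List.Pairwise (· < ·) Q := bdry_sorted x
  have hQmem := List.pairwise_iff_getElem.mp hQs
  have hrQ : numRuns x = Q.length + 1 := bdry_length x
  have hQn : ∀ j ∈ Q, j < x.length - 1 := fun j hj => (bdry_mem hj).1
  set sA := A.sort (·≤·) with hsAdef
  set sB := B.sort (·≤·) with hsBdef
  have hlA : sA.length = a := by rw [hsAdef, Finset.length_sort]; exact hcA
  have hlB : sB.length = b := by rw [hsBdef, Finset.length_sort]; exact hcB
  have hsAs : List.Pairwise (· < ·) sA := (Finset.sortedLT_sort A).pairwise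
  have hsBs : List.Pairwise (· < ·) sB := (Finset.sortedLT_sort B).pairwise
  have hsAget := List.pairwise_iff_getElem.mp hsAs
  have hsBget := List.pairwise_iff_getElem.mp hsBs
  have hsAm : ∀ i, i < a → sA.getD i 0 < numRuns x - a - 2 - (a+1)*c := by
    intro i hi
    rw [List.getD_eq_getElem _ _ (by omega)]
    have hm : sA[i] ∈ sA := List.getElem_mem _
    have := hA ((Finset.mem_sort _).mp hm)
    simpa [Finset.mem_range] using this
  have hsBm : ∀ i, i < b → sB.getD i 0 < x.length - 2*a - 1 - (2*a+b+1)*c := by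
    intro i hi
    rw [List.getD_eq_getElem _ _ (by omega)]
    have hm : sB[i] ∈ sB := List.getElem_mem _
    have := hB ((Finset.mem_sort _).mp hm)
    simpa [Finset.mem_range] using this
  have hsAmono : ∀ i j, i < j → j < a → sA.getD i 0 < sA.getD j 0 := by
    intro i j hij hj
    rw [List.getD_eq_getElem _ _ (by omega), List.getD_eq_getElem _ _ (by omega)]
    exact hsAget i j (by omega) (by omega) hij
  have hsBmono : ∀ i j, i < j → j < b → sB.getD i 0 < sB.getD j 0 := by
    intro i j hij hj
    rw [List.getD_eq_getElem _ _ (by omega), List.getD_eq_getElem _ _ (by omega)]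
    exact hsBget i j (by omega) (by omega) hij
  have e1 : (a+1)*c = a*c + c := by ring
  have e2 : a*(c+1) = a*c + a := by ring
  have e3 : (2*a+b+1)*c = a*c + a*c + b*c + c := by ring
  have e4 : (2*c+2)*a = a*c + a*c + a + a := by ring
  -- deletion index bounds
  have hJbound : ∀ i, i < a → sA.getD i 0 + i*(c+1) + (c+3) ≤ Q.length := by
    intro i hi
    have hm := hsAm i hi
    have hmul : i*(c+1) + (c+1) ≤ a*(c+1) := by
      have := Nat.mul_le_mul_right (c+1) (show i+1 ≤ a by omega)
      simpa [Nat.succ_mul] using this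
    omega
  have hJlt : ∀ i, i < a → sA.getD i 0 + i*(c+1) < Q.length := by
    intro i hi; have := hJbound i hi; omega
  have hdel_lt : ∀ i, i < a → delP x c sA i + (c + 4) ≤ x.length := by
    intro i hi
    have hJ := hJbound i hi
    have hJ2 := hJlt i hi
    rw [delP, ← hQdef, List.getD_eq_getElem _ _ hJ2]
    have hQlen0 : 0 < Q.length := by omega
    have h5 := sorted_lt_getElem_add Q hQs
      (show sA.getD i 0 + i*(c+1) ≤ Q.length - 1 by omega) (show Q.length - 1 < Q.length by omega)
    have h6 : Q[Q.length - 1] < x.length - 1 := hQn _ (List.getElem_mem _)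
    omega
  have hdel_bdry : ∀ i, i < a → x[delP x c sA i]? ≠ x[delP x c sA i + 1]? := by
    intro i hi
    have hJ2 := hJlt i hi
    rw [delP, ← hQdef, List.getD_eq_getElem _ _ hJ2]
    exact (bdry_mem (List.getElem_mem _)).2
  have hdelgap : ∀ i j, i < j → j < a → delP x c sA i + (c+2) ≤ delP x c sA j := by
    intro i j hij hj
    have hJi := hJlt i (by omega)
    have hJj := hJlt j hj
    rw [delP, delP, ← hQdef, List.getD_eq_getElem _ _ hJi, List.getD_eq_getElem _ _ hJj]
    have hmono := hsAmono i j hij hj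
    have hmul : i*(c+1) + (c+1) ≤ j*(c+1) := by
      have := Nat.mul_le_mul_right (c+1) (show i+1 ≤ j by omega)
      simpa [Nat.succ_mul] using this
    have h5 := sorted_lt_getElem_add Q hQs
      (show sA.getD i 0 + i*(c+1) ≤ sA.getD j 0 + j*(c+1) by omega) hJj
    omega
  set dp := dels x c a sA with hdpdef
  have hdplen : dp.length = a := by simp [hdpdef, dels]
  have hdp_get : ∀ i (h : i < a), dp[i]'(by omega) = delP x c sA i := by
    intro i h
    simp [hdpdef, dels]
  have hdp_pw : List.Pairwise (fun p p' : ℕ => p + (c+2) ≤ p') dp := by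
    rw [List.pairwise_iff_getElem]
    intro i j hi hj hij
    rw [hdp_get i (by omega), hdp_get j (by omega)]
    exact hdelgap i j hij (by omega)
  have hdp_mem : ∀ p ∈ dp, ∃ i, i < a ∧ p = delP x c sA i := by
    intro p hp
    rw [hdpdef, dels, List.mem_map] at hp
    obtain ⟨i, hi, hpe⟩ := hp
    exact ⟨i, List.mem_range.mp hi, hpe.symm⟩
  -- insertion bounds
  have hins_le : ∀ i, i < b → insP c dp sB i + (c+2) ≤ x.length := by
    intro i hi
    have hm := hsBm i hi
    have hmul : i*c + c ≤ b*c := by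
      have := Nat.mul_le_mul_right c (show i+1 ≤ b by omega)
      simpa [Nat.succ_mul] using this
    have hle := shiftZ_le c dp (sB.getD i 0 + i * c)
    rw [hdplen] at hle
    rw [insP]
    omega
  have hinsgap : ∀ i j, i < j → j < b → insP c dp sB i + (c+1) ≤ insP c dp sB j := by
    intro i j hij hj
    have hmono := hsBmono i j hij hj
    have hmul : i*c + c ≤ j*c := by
      have := Nat.mul_le_mul_right c (show i+1 ≤ j by omega)
      simpa [Nat.succ_mul] using this
    have := shiftZ_gap c dp (sB.getD i 0 + i * c) (sB.getD j 0 + j * c) (by omega)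
    rw [insP, insP]
    omega
  have hzone : ∀ i, i < b → ∀ p ∈ dp,
      insP c dp sB i + c + 1 ≤ p ∨ p + c + 2 ≤ insP c dp sB i := by
    intro i _
    exact shiftZ_zone c dp _ (hdp_pw.imp (by intro u v h; omega))
  -- the pre-merge list
  set inssL := (List.range b).map (fun i =>
      (insP c dp sB i, some ((x.getD (insP c dp sB i) 0).succAbove (f i)))) with hinssdef
  have hEeq : bigE x c a b A B f
      = (dp.map (fun p => (p, (none : Option (Fin (k+2)))))) ++ inssL := rfl
  have hinss_get : ∀ i (h : i < b), inssL[i]'(by simp [hinssdef]; omega)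
      = (insP c dp sB i, some ((x.getD (insP c dp sB i) 0).succAbove (f i))) := by
    intro i h
    simp [hinssdef]
  have hE_pw : List.Pairwise (fun u v => Rel c u v ∨ Rel c v u) (bigE x c a b A B f) := by
    rw [hEeq, List.pairwise_append]
    refine ⟨?_, ?_, ?_⟩
    · rw [List.pairwise_map]
      refine hdp_pw.imp ?_
      intro u v h
      left
      simp only [Rel, cost, Option.isNone_none, if_pos]
      omega
    · rw [hinssdef, List.pairwise_map]
      rw [List.pairwise_iff_getElem]
      intro i j hi hj hij
      rw [List.length_range] at hi hj
      rw [List.getElem_range, List.getElem_range]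
      left
      simp only [Rel, cost, Option.isNone_some, if_neg]
      have := hinsgap i j hij hj
      simp only [Bool.false_eq_true, not_false_eq_true, if_neg]
      omega
    · intro u hu v hv
      rw [List.mem_map] at hu
      obtain ⟨p, hp, rfl⟩ := hu
      rw [hinssdef, List.mem_map] at hv
      obtain ⟨i, hi, rfl⟩ := hv
      rw [List.mem_range] at hi
      rcases hzone i hi p hp with h | h
      · right
        simp only [Rel, cost, Option.isNone_some, Bool.false_eq_true, not_false_eq_true, if_neg]
        omega
      · left
        simp only [Rel, cost, Option.isNone_none, if_pos]
        omega
  have hL_perm : (bigL x c a b A B f).Perm (bigE x c a b A B f) := List.mergeSort_perm _ _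
  have hL_pwS : List.Pairwise (fun u v => Rel c u v ∨ Rel c v u) (bigL x c a b A B f) :=
    hE_pw.perm hL_perm.symm (fun h => h.symm)
  have hL_le : List.Pairwise (fun u v : ℕ × Option (Fin (k+2)) => u.1 ≤ v.1)
      (bigL x c a b A B f) := by
    have := List.pairwise_mergeSort (le := fun u v : ℕ × Option (Fin (k+2)) => decide (u.1 ≤ v.1))
      (by intro u v w h1 h2; simp at *; omega)
      (by intro u v; simpa using Nat.le_total u.1 v.1) (bigE x c a b A B f)
    rw [← bigL] at this
    exact this.imp (by intro u v h; simpa using h)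
  have hL_R : List.Pairwise (Rel c) (bigL x c a b A B f) := by
    have hand := hL_le.and hL_pwS
    refine hand.imp ?_
    rintro u v ⟨hle, hR | hR⟩
    · exact hR
    · exfalso
      simp only [Rel] at hR
      omega
  have hL_lt : List.Pairwise (fun u v : ℕ × Option (Fin (k+2)) => u.1 < v.1)
      (bigL x c a b A B f) := by
    refine hL_R.imp ?_
    intro u v h
    simp only [Rel] at h
    omega
  have hL_mem : ∀ u ∈ bigL x c a b A B f, u.1 + c + 2 ≤ x.length ∧
      (u.2 = none → x[u.1]? ≠ x[u.1+1]?) ∧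
      (∀ s, u.2 = some s → x[u.1]? ≠ some s) := by
    intro u hu
    have hm := (hL_perm.mem_iff).mp hu
    rw [hEeq, List.mem_append] at hm
    rcases hm with h | h
    · rw [List.mem_map] at h
      obtain ⟨p, hp, rfl⟩ := h
      obtain ⟨i, hi, rfl⟩ := hdp_mem p hp
      exact ⟨by have := hdel_lt i hi; omega, fun _ => hdel_bdry i hi, by simp⟩
    · rw [hinssdef, List.mem_map] at h
      obtain ⟨i, hi, rfl⟩ := h
      rw [List.mem_range] at hi
      refine ⟨hins_le i hi, by simp, ?_⟩
      intro s hs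
      have hs' : s = (x.getD (insP c dp sB i) 0).succAbove (f i) :=
        (Option.some_injective _ hs).symm
      subst hs'
      have ht : insP c dp sB i < x.length := by have := hins_le i hi; omega
      rw [List.getElem?_eq_getElem ht, List.getD_eq_getElem _ _ ht]
      intro hcon
      exact Fin.succAbove_ne _ (f i) (Option.some_injective _ hcon).symm
  have hOk : Ok c x (toScript 0 (bigL x c a b A B f)) := by
    have := Ok_toScript (x := x) (bigL x c a b A B f) 0 (fun u _ => Nat.zero_le _)
      (fun u hu => (hL_mem u hu).1) (fun u hu => (hL_mem u hu).2.1)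
      (fun u hu => (hL_mem u hu).2.2) hL_R.isChain
    rwa [List.drop_zero] at this
  have hcountd : delCount (bigL x c a b A B f) = a := by
    unfold delCount
    rw [hL_perm.countP_eq, hEeq, hinssdef]
    simp [List.countP_append, List.countP_map, Function.comp_def, hdplen]
  have hcounti : insCount (bigL x c a b A B f) = b := by
    unfold insCount
    rw [hL_perm.countP_eq, hEeq, hinssdef]
    simp [List.countP_append, List.countP_map, Function.comp_def]
  refine ⟨hL_lt, hOk, hcountd, hcounti, ?_, ?_, hJlt⟩
  · rw [List.pairwise_map]
    refine hdp_pw.imp ?_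
    intro u v h
    omega
  · rw [hinssdef, List.pairwise_iff_getElem]
    intro i j hi hj hij
    rw [List.length_map, List.length_range] at hi hj
    simp only [List.getElem_map, List.getElem_range]
    have := hinsgap i j hij hj
    omega

end S8

namespace S8

lemma recover (k c a b : ℕ) (x : List (Fin (k+2)))
    (hc : ∀ w : List (Fin (k+2)), w.IsInfix x → IsAlternating w → w.length ≤ c)
    (h1 : a ≤ numRuns x - a - 2 - (a+1)*c)
    (h2 : b ≤ x.length - 2*a - 1 - (2*a+b+1)*c)
    (A B A' B' : Finset ℕ) (f f' : ℕ → Fin (k+1))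
    (hA : A ⊆ Finset.range (numRuns x - a - 2 - (a+1)*c)) (hcA : A.card = a)
    (hB : B ⊆ Finset.range (x.length - 2*a - 1 - (2*a+b+1)*c)) (hcB : B.card = b)
    (hA' : A' ⊆ Finset.range (numRuns x - a - 2 - (a+1)*c)) (hcA' : A'.card = a)
    (hB' : B' ⊆ Finset.range (x.length - 2*a - 1 - (2*a+b+1)*c)) (hcB' : B'.card = b)
    (he : bigW x c a b A B f = bigW x c a b A' B' f') :
    A = A' ∧ B = B' ∧ ∀ i, i < b → f i = f' i := by
  obtain ⟨hlt, hOk, _, _, hpd, hpi, hJlt⟩ := datum_facts k c a b x h1 h2 A B f hA hcA hB hcB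
  obtain ⟨hlt', hOk', _, _, hpd', hpi', hJlt'⟩ :=
    datum_facts k c a b x h1 h2 A' B' f' hA' hcA' hB' hcB'
  have hQs : List.Pairwise (· < ·) (bdry x) := bdry_sorted x
  have hQmem := List.pairwise_iff_getElem.mp hQs
  have hscript : toScript 0 (bigL x c a b A B f) = toScript 0 (bigL x c a b A' B' f') :=
    app_inj _ hc hOk hOk' he
  have hLL : bigL x c a b A B f = bigL x c a b A' B' f' :=
    toScript_inj _ _ 0 (fun _ _ => Nat.zero_le _) (fun _ _ => Nat.zero_le _) hlt hlt' hscript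
  have hEE : (bigE x c a b A B f).Perm (bigE x c a b A' B' f') := by
    have p1 : (bigL x c a b A B f).Perm (bigE x c a b A B f) := List.mergeSort_perm _ _
    have p2 : (bigL x c a b A' B' f').Perm (bigE x c a b A' B' f') := List.mergeSort_perm _ _
    rw [hLL] at p1
    exact p1.symm.trans p2
  -- recover the deletion part
  have hfil : ∀ (AA BB : Finset ℕ) (ff : ℕ → Fin (k+1)),
      (bigE x c a b AA BB ff).filter (fun u => u.2.isNone)
        = (dels x c a (AA.sort (·≤·))).map (fun p => (p, (none : Option (Fin (k+2))))) := by
    intro AA BB ff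
    rw [bigE, List.filter_append, List.filter_map, List.filter_map]
    simp [Function.comp_def]
  have hdeq : (dels x c a (A.sort (·≤·))).map (fun p => (p, (none : Option (Fin (k+2)))))
      = (dels x c a (A'.sort (·≤·))).map (fun p => (p, (none : Option (Fin (k+2))))) := by
    have := hEE.filter (fun u => u.2.isNone)
    rw [hfil A B f, hfil A' B' f'] at this
    exact sorted_perm_eq _ _ this hpd hpd'
  have hdp : dels x c a (A.sort (·≤·)) = dels x c a (A'.sort (·≤·)) := by
    have := congrArg (List.map Prod.fst) hdeq
    simpa [List.map_map, Function.comp_def] using this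
  have hdelP : ∀ i, i < a → delP x c (A.sort (·≤·)) i = delP x c (A'.sort (·≤·)) i := by
    have := hdp
    rw [dels, dels] at this
    exact range_map_eq this
  have hsAeq : A.sort (·≤·) = A'.sort (·≤·) := by
    have hlA : (A.sort (·≤·)).length = a := by rw [Finset.length_sort]; exact hcA
    have hlA' : (A'.sort (·≤·)).length = a := by rw [Finset.length_sort]; exact hcA'
    apply List.ext_getElem (by omega)
    intro i hi hi'
    have hia : i < a := by omega
    have hQab : ∀ m m', m < (bdry x).length → m' < (bdry x).length →
        (bdry x).getD m 0 = (bdry x).getD m' 0 → m = m' := by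
      intro m m' hm hm' hqe
      rw [List.getD_eq_getElem _ _ hm, List.getD_eq_getElem _ _ hm'] at hqe
      rcases lt_trichotomy m m' with h | h | h
      · have := hQmem m m' hm hm' h; omega
      · exact h
      · have := hQmem m' m hm' hm h; omega
    have hJ := hQab _ _ (hJlt i hia) (hJlt' i hia) (by
      have := hdelP i hia
      rw [delP, delP] at this
      exact this)
    have : (A.sort (·≤·)).getD i 0 = (A'.sort (·≤·)).getD i 0 := by omega
    rwa [List.getD_eq_getElem (A.sort (·≤·)) 0 (by omega),
      List.getD_eq_getElem (A'.sort (·≤·)) 0 (by omega)] at this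
  have hAA : A = A' := by
    have := congrArg List.toFinset hsAeq
    rwa [Finset.sort_toFinset, Finset.sort_toFinset] at this
  -- recover the insertion part
  have hfil2 : ∀ (AA BB : Finset ℕ) (ff : ℕ → Fin (k+1)),
      (bigE x c a b AA BB ff).filter (fun u => u.2.isSome)
        = (List.range b).map (fun i =>
            (insP c (dels x c a (AA.sort (·≤·))) (BB.sort (·≤·)) i,
             some ((x.getD (insP c (dels x c a (AA.sort (·≤·))) (BB.sort (·≤·)) i) 0).succAbove
               (ff i)))) := by
    intro AA BB ff
    rw [bigE, List.filter_append, List.filter_map, List.filter_map]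
    simp [Function.comp_def]
  have hieq := hEE.filter (fun u => u.2.isSome)
  rw [hfil2 A B f, hfil2 A' B' f'] at hieq
  have hieq2 := sorted_perm_eq _ _ hieq hpi hpi'
  have hptw := range_map_eq hieq2
  have hlB : (B.sort (·≤·)).length = b := by rw [Finset.length_sort]; exact hcB
  have hlB' : (B'.sort (·≤·)).length = b := by rw [Finset.length_sort]; exact hcB'
  rw [hsAeq] at hptw
  have hV : ∀ i, i < b → (B.sort (·≤·)).getD i 0 = (B'.sort (·≤·)).getD i 0 := by
    intro i hi
    have hp := hptw i hi
    have ht : insP c (dels x c a (A'.sort (·≤·))) (B.sort (·≤·)) i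
        = insP c (dels x c a (A'.sort (·≤·))) (B'.sort (·≤·)) i := congrArg Prod.fst hp
    rw [insP, insP] at ht
    rcases lt_trichotomy ((B.sort (·≤·)).getD i 0) ((B'.sort (·≤·)).getD i 0) with h | h | h
    · exfalso
      have := shiftZ_strictMono c (dels x c a (A'.sort (·≤·)))
        (show (B.sort (·≤·)).getD i 0 + i*c < (B'.sort (·≤·)).getD i 0 + i*c by omega)
      omega
    · exact h
    · exfalso
      have := shiftZ_strictMono c (dels x c a (A'.sort (·≤·)))
        (show (B'.sort (·≤·)).getD i 0 + i*c < (B.sort (·≤·)).getD i 0 + i*c by omega)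
      omega
  have hsBeq : B.sort (·≤·) = B'.sort (·≤·) := by
    apply List.ext_getElem (by omega)
    intro i hi hi'
    have := hV i (by omega)
    rwa [List.getD_eq_getElem (B.sort (·≤·)) 0 (by omega),
      List.getD_eq_getElem (B'.sort (·≤·)) 0 (by omega)] at this
  have hBB : B = B' := by
    have := congrArg List.toFinset hsBeq
    rwa [Finset.sort_toFinset, Finset.sort_toFinset] at this
  refine ⟨hAA, hBB, ?_⟩
  intro i hi
  have hp := hptw i hi
  rw [hsBeq] at hp
  have hsnd := congrArg Prod.snd hp
  simp only at hsnd
  have := Option.some_injective _ hsnd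
  exact Fin.succAbove_right_injective this

end S8

namespace S8

lemma keylem (k c a b : ℕ) (x : List (Fin (k+2)))
    (hc : ∀ w : List (Fin (k+2)), w.IsInfix x → IsAlternating w → w.length ≤ c)
    (h1 : a ≤ numRuns x - a - 2 - (a+1)*c)
    (h2 : b ≤ x.length - 2*a - 1 - (2*a+b+1)*c) :
    (numRuns x - a - 2 - (a+1)*c).choose a *
      (x.length - 2*a - 1 - (2*a+b+1)*c).choose b * (k+1)^b
      ≤ (sSet (k+2) x.length a b x).ncard := by
  classical
  set Dom : Finset ((Finset ℕ × Finset ℕ) × (Fin b → Fin (k+1))) :=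
    ((Finset.range (numRuns x - a - 2 - (a+1)*c)).powersetCard a ×ˢ
      (Finset.range (x.length - 2*a - 1 - (2*a+b+1)*c)).powersetCard b) ×ˢ Finset.univ
      with hDom
  set F : ((Finset ℕ × Finset ℕ) × (Fin b → Fin (k+1))) → List (Fin (k+2)) :=
    fun d => bigW x c a b d.1.1 d.1.2 (fun i => if h : i < b then d.2 ⟨i, h⟩ else 0) with hF
  have hmem : ∀ d ∈ Dom,
      (d.1.1 ⊆ Finset.range (numRuns x - a - 2 - (a+1)*c) ∧ d.1.1.card = a) ∧
      (d.1.2 ⊆ Finset.range (x.length - 2*a - 1 - (2*a+b+1)*c) ∧ d.1.2.card = b) := by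
    intro d hd
    rw [hDom, Finset.mem_product] at hd
    have hd1 := hd.1
    rw [Finset.mem_product] at hd1
    exact ⟨Finset.mem_powersetCard.mp hd1.1, Finset.mem_powersetCard.mp hd1.2⟩
  have hQle : (bdry x).length ≤ x.length - 1 := by
    have := List.length_filter_le (fun i => decide (x[i]? ≠ x[i+1]?)) (List.range (x.length - 1))
    simpa [bdry] using this
  have hrQ : numRuns x = (bdry x).length + 1 := bdry_length x
  have himg : ∀ d ∈ Dom, F d ∈ sSet (k+2) x.length a b x := by
    intro d hd
    obtain ⟨⟨hA, hcA⟩, ⟨hB, hcB⟩⟩ := hmem d hd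
    obtain ⟨hlt, hOk, hcd, hci, -, -, -⟩ := datum_facts k c a b x h1 h2 d.1.1 d.1.2
      (fun i => if h : i < b then d.2 ⟨i, h⟩ else 0) hA hcA hB hcB
    have hlen := app_length _ hOk
    rw [toScript_delCount, toScript_insCount, hcd, hci] at hlen
    obtain ⟨z, hz1, hz2, hz3⟩ := exists_common _ hOk
    rw [toScript_delCount, hcd] at hz1
    constructor
    · show (F d).length = x.length - a + b
      rw [hF]
      simp only [bigW]
      omega
    · exact ⟨z, by omega, hz2, hz3⟩
  have hinj : Set.InjOn F ↑Dom := by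
    intro d1 hd1 d2 hd2 he
    simp only [Finset.mem_coe] at hd1 hd2
    obtain ⟨⟨hA1, hcA1⟩, ⟨hB1, hcB1⟩⟩ := hmem d1 hd1
    obtain ⟨⟨hA2, hcA2⟩, ⟨hB2, hcB2⟩⟩ := hmem d2 hd2
    simp only [hF] at he
    obtain ⟨hAA, hBB, hff⟩ := recover k c a b x hc h1 h2 d1.1.1 d1.1.2 d2.1.1 d2.1.2 _ _
      hA1 hcA1 hB1 hcB1 hA2 hcA2 hB2 hcB2 he
    have hf2 : d1.2 = d2.2 := by
      funext j
      have := hff j.val j.isLt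
      simpa [j.isLt] using this
    obtain ⟨⟨A1, B1⟩, f1⟩ := d1
    obtain ⟨⟨A2, B2⟩, f2⟩ := d2
    simp only at hAA hBB hf2
    rw [hAA, hBB, hf2]
  calc (numRuns x - a - 2 - (a+1)*c).choose a *
      (x.length - 2*a - 1 - (2*a+b+1)*c).choose b * (k+1)^b
      = Dom.card := by
        rw [hDom, Finset.card_product, Finset.card_product, Finset.card_powersetCard,
          Finset.card_powersetCard, Finset.card_range, Finset.card_range, Finset.card_univ]
        congr 1
        rw [Fintype.card_fun, Fintype.card_fin, Fintype.card_fin]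
    _ = (Dom.image F).card := (Finset.card_image_of_injOn hinj).symm
    _ ≤ (sSet (k+2) x.length a b x).ncard := by
        have hsub : ↑(Dom.image F) ⊆ sSet (k+2) x.length a b x := by
          intro w hw
          simp only [Finset.coe_image, Set.mem_image, Finset.mem_coe] at hw
          obtain ⟨d, hd, rfl⟩ := hw
          exact himg d hd
        have hfin : (sSet (k+2) x.length a b x).Finite :=
          (List.finite_length_eq (Fin (k+2)) (x.length - a + b)).subset (fun w hw => hw.1)
        have := Set.ncard_le_ncard hsub hfin
        rwa [Set.ncard_coe_finset] at this

end S8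

/-- if x is a q-ary string of length n with exactly r runs whose alternating
infixes all have length at most c, then
|S_{a,b}(x)| ≥ C(r - a - 2 - (a+1)c, a) · C(n - 2a - 1 - (2a+b+1)c, b) · (q-1)^b,
with truncated natural subtraction. -/
theorem stmt_8 (q n r c a b : ℕ) (hq : 2 ≤ q) (x : List (Fin q)) (hx : x.length = n)
    (hr : numRuns x = r)
    (hc : ∀ w : List (Fin q), w.IsInfix x → IsAlternating w → w.length ≤ c) :
    (r - a - 2 - (a + 1) * c).choose a * (n - 2 * a - 1 - (2 * a + b + 1) * c).choose b *
        (q - 1) ^ b ≤ (sSet q n a b x).ncard := by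
  obtain ⟨k, rfl⟩ : ∃ k, q = k + 2 := ⟨q - 2, by omega⟩
  subst hx
  subst hr
  by_cases h1 : a ≤ numRuns x - a - 2 - (a+1)*c
  · by_cases h2 : b ≤ x.length - 2*a - 1 - (2*a+b+1)*c
    · have := S8.keylem k c a b x hc h1 h2
      simpa using this
    · rw [Nat.choose_eq_zero_of_lt
        (show x.length - 2*a - 1 - (2*a+b+1)*c < b by omega)]
      simp
  · rw [Nat.choose_eq_zero_of_lt (show numRuns x - a - 2 - (a+1)*c < a by omega)]
    simp
end

section
/- Let q ≥ 1 and let n, r be natural numbers with 1 ≤ r ≤ n. The number of q-ary strings of length n with exactly r runs equals q · C(n-1, r-1) · (q-1)^{r-1}. -/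
/-- Extend `d : Fin m → Fin q` by zero to all of `ℕ`. -/
def extd {q m : ℕ} [NeZero q] (d : Fin m → Fin q) (i : ℕ) : Fin q :=
  if h : i < m then d ⟨i, h⟩ else 0

/-- Partial sums. -/
def strFun {q m : ℕ} [NeZero q] (a : Fin q) (d : Fin m → Fin q) (j : ℕ) : Fin q :=
  a + ∑ i ∈ Finset.range j, extd d i

lemma strFun_succ {q m : ℕ} [NeZero q] (a : Fin q) (d : Fin m → Fin q) (j : ℕ) :
    strFun a d (j + 1) = strFun a d j + extd d j := by
  simp [strFun, Finset.sum_range_succ, add_assoc]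

/-- Build a string of length `m+1` from its first letter and successive differences. -/
def mkStr {q m : ℕ} [NeZero q] (a : Fin q) (d : Fin m → Fin q) : List (Fin q) :=
  List.ofFn (fun j : Fin (m + 1) => strFun a d j)

lemma length_mkStr {q m : ℕ} [NeZero q] (a : Fin q) (d : Fin m → Fin q) :
    (mkStr a d).length = m + 1 := by simp [mkStr]

lemma getElem?_mkStr {q m : ℕ} [NeZero q] (a : Fin q) (d : Fin m → Fin q)
    {j : ℕ} (hj : j < m + 1) : (mkStr a d)[j]? = some (strFun a d j) := by
  rw [List.getElem?_eq_getElem (by simpa [length_mkStr] using hj)]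
  congr 1
  exact List.getElem_ofFn _

lemma numRuns_mkStr {q m : ℕ} [NeZero q] (a : Fin q) (d : Fin m → Fin q) :
    numRuns (mkStr a d) = 1 + (Finset.univ.filter fun i : Fin m => d i ≠ 0).card := by
  unfold numRuns
  rw [length_mkStr]
  congr 1
  have h1 : ((Finset.range (m + 1 - 1)).filter
      fun i => (mkStr a d)[i]? ≠ (mkStr a d)[i + 1]?) =
      (Finset.range m).filter fun i => extd d i ≠ 0 := by
    simp only [Nat.add_sub_cancel]
    apply Finset.filter_congr
    intro i hi
    rw [Finset.mem_range] at hi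
    rw [getElem?_mkStr a d (by omega), getElem?_mkStr a d (by omega)]
    rw [strFun_succ]
    constructor
    · intro h h0
      exact h (by simp [h0])
    · intro h h0
      apply h
      have := Option.some.inj h0
      have : strFun a d i + extd d i - strFun a d i = 0 := by rw [← this]; simp
      simpa using this
  rw [h1]
  apply Finset.card_bij (fun i hi => (⟨i, by simpa using (Finset.mem_filter.mp hi).1⟩ : Fin m))
  · intro i hi
    have := (Finset.mem_filter.mp hi).2
    simp only [Finset.mem_filter, Finset.mem_univ, true_and]
    intro h0
    apply this
    have hi' : i < m := by simpa using (Finset.mem_filter.mp hi).1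
    simpa [extd, hi'] using h0
  · intro i hi j hj h
    simpa using congrArg Fin.val h
  · intro b hb
    refine ⟨b.1, Finset.mem_filter.mpr ⟨Finset.mem_range.mpr b.2, ?_⟩, by simp⟩
    have := (Finset.mem_filter.mp hb).2
    simpa [extd, b.2] using this

lemma mkStr_injective {q m : ℕ} [NeZero q] :
    Function.Injective (fun p : Fin q × (Fin m → Fin q) => mkStr p.1 p.2) := by
  rintro ⟨a, d⟩ ⟨a', d'⟩ h
  simp only [mkStr] at h
  have h' := List.ofFn_injective h
  have hf : ∀ j : ℕ, j < m + 1 → strFun a d j = strFun a' d' j := by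
    intro j hj
    exact congrFun h' ⟨j, hj⟩
  have ha : a = a' := by
    have := hf 0 (by omega); simpa [strFun] using this
  have hd : d = d' := by
    funext i
    have h1 := hf i (by omega)
    have h2 := hf (i + 1) (by omega)
    rw [strFun_succ, strFun_succ, h1] at h2
    have : extd d i = extd d' i := by
      have := add_left_cancel h2
      exact this
    simpa [extd, i.2] using this
  simp [ha, hd]

lemma mkStr_surj {q m : ℕ} [NeZero q] (x : List (Fin q)) (hx : x.length = m + 1) :
    ∃ (a : Fin q) (d : Fin m → Fin q), mkStr a d = x := by
  refine ⟨x[0]'(by omega), fun i : Fin m => x[i.1 + 1]'(by omega) - x[i.1]'(by omega), ?_⟩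
  have key : ∀ j, (hj : j < m + 1) →
      strFun (x[0]'(by omega)) (fun i : Fin m => x[i.1 + 1]'(by omega) - x[i.1]'(by omega)) j
        = x[j]'(by omega) := by
    intro j
    induction j with
    | zero => intro hj; simp [strFun]
    | succ j ih =>
      intro hj
      rw [strFun_succ, ih (by omega)]
      have hjm : j < m := by omega
      simp [extd, hjm]
  apply List.ext_getElem (by simp [length_mkStr, hx])
  intro j h1 h2
  have hj : j < m + 1 := by simpa [length_mkStr] using h1
  rw [show (mkStr (x[0]'(by omega)) (fun i : Fin m => x[i.1 + 1]'(by omega) - x[i.1]'(by omega)))[j]'h1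
      = strFun (x[0]'(by omega)) (fun i : Fin m => x[i.1 + 1]'(by omega) - x[i.1]'(by omega)) j
    from List.getElem_ofFn _, key j hj]

/-- Counting functions `Fin m → Fin q` with exactly `k` nonzero values. -/
lemma card_weight (m k q : ℕ) [NeZero q] :
    (Finset.univ.filter fun d : Fin m → Fin q =>
      (Finset.univ.filter fun i => d i ≠ 0).card = k).card = m.choose k * (q - 1) ^ k := by
  have hq : 0 < q := Nat.pos_of_ne_zero (NeZero.ne q)
  have fiber : ∀ S : Finset (Fin m),
      (Finset.univ.filter fun d : Fin m → Fin q =>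
        (Finset.univ.filter fun i => d i ≠ 0) = S).card = (q - 1) ^ S.card := by
    intro S
    rw [← Fintype.card_subtype]
    have e : {d : Fin m → Fin q // (Finset.univ.filter fun i => d i ≠ 0) = S}
        ≃ (S → {b : Fin q // b ≠ 0}) := by
      refine ⟨fun d i => ⟨d.1 i.1, ?_⟩,
        fun g => ⟨fun i => if h : i ∈ S then (g ⟨i, h⟩).1 else 0, ?_⟩, ?_, ?_⟩
      · have := d.2
        intro h0
        have : (i : Fin m) ∈ Finset.univ.filter fun j => d.1 j ≠ 0 := by rw [this]; exact i.2
        exact (Finset.mem_filter.mp this).2 h0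
      · ext i
        simp only [Finset.mem_filter, Finset.mem_univ, true_and]
        by_cases h : i ∈ S
        · simp [h, (g ⟨i, h⟩).2]
        · simp [h]
      · rintro ⟨d, hd⟩
        apply Subtype.ext
        funext i
        by_cases h : i ∈ S
        · simp [h]
        · have : i ∉ Finset.univ.filter fun j => d j ≠ 0 := by rw [hd]; exact h
          simp only [Finset.mem_filter, Finset.mem_univ, true_and, not_not] at this
          simp [h, this]
      · intro g
        funext i
        apply Subtype.ext
        simp [i.2]
    rw [Fintype.card_congr e, Fintype.card_fun, Fintype.card_coe]
    congr 1
    have h1 : Fintype.card {b : Fin q // ¬ b = 0} =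
        Fintype.card (Fin q) - Fintype.card {b : Fin q // b = 0} :=
      Fintype.card_subtype_compl _
    simpa [Fintype.card_subtype_eq] using h1
  rw [Finset.card_eq_sum_card_fiberwise
    (f := fun d : Fin m → Fin q => Finset.univ.filter fun i => d i ≠ 0)
    (t := Finset.powersetCard k Finset.univ)
    (fun d hd => by
      rw [Finset.mem_coe, Finset.mem_powersetCard]
      exact ⟨Finset.subset_univ _, (Finset.mem_filter.mp (Finset.mem_coe.mp hd)).2⟩)]
  have step : ∀ S ∈ Finset.powersetCard k (Finset.univ : Finset (Fin m)),
      ((Finset.univ.filter fun d : Fin m → Fin q =>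
        (Finset.univ.filter fun i => d i ≠ 0).card = k).filter
          fun d => (Finset.univ.filter fun i => d i ≠ 0) = S).card = (q - 1) ^ k := by
    intro S hS
    have hSk : S.card = k := (Finset.mem_powersetCard.mp hS).2
    have hEq : ((Finset.univ.filter fun d : Fin m → Fin q =>
        (Finset.univ.filter fun i => d i ≠ 0).card = k).filter
          fun d => (Finset.univ.filter fun i => d i ≠ 0) = S) =
        Finset.univ.filter fun d : Fin m → Fin q =>
          (Finset.univ.filter fun i => d i ≠ 0) = S := by
      ext d
      simp only [Finset.mem_filter, Finset.mem_univ, true_and]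
      constructor
      · exact fun h => h.2
      · intro h; exact ⟨by rw [h, hSk], h⟩
    rw [hEq, fiber S, hSk]
  rw [Finset.sum_congr rfl step, Finset.sum_const, Finset.card_powersetCard,
    Finset.card_univ, Fintype.card_fin, smul_eq_mul]

/-- for q ≥ 1 and 1 ≤ r ≤ n, the number of q-ary strings of length n with
exactly r runs equals q · C(n-1, r-1) · (q-1)^{r-1}. -/
theorem stmt_10 (q n r : ℕ) (hq : 1 ≤ q) (hr : 1 ≤ r) (hrn : r ≤ n) :
    {x : List (Fin q) | x.length = n ∧ numRuns x = r}.ncard =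
      q * (n - 1).choose (r - 1) * (q - 1) ^ (r - 1) := by
  haveI : NeZero q := ⟨by omega⟩
  obtain ⟨m, rfl⟩ : ∃ m, n = m + 1 := ⟨n - 1, by omega⟩
  obtain ⟨k, rfl⟩ : ∃ k, r = k + 1 := ⟨r - 1, by omega⟩
  simp only [Nat.add_sub_cancel]
  set F : Finset (Fin q × (Fin m → Fin q)) :=
    Finset.univ.filter (fun p => (Finset.univ.filter fun i => p.2 i ≠ 0).card = k) with hF
  have hset : {x : List (Fin q) | x.length = m + 1 ∧ numRuns x = k + 1} =
      (fun p : Fin q × (Fin m → Fin q) => mkStr p.1 p.2) '' ↑F := by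
    ext x
    simp only [Set.mem_setOf_eq, Set.mem_image, Finset.coe_filter, Set.mem_setOf_eq,
      Finset.mem_univ, true_and, hF]
    constructor
    · rintro ⟨hlen, hruns⟩
      obtain ⟨a, d, hx⟩ := mkStr_surj x hlen
      refine ⟨⟨a, d⟩, show (Finset.univ.filter fun i => d i ≠ 0).card = k from ?_, hx⟩
      have := numRuns_mkStr a d
      rw [hx, hruns] at this
      omega
    · rintro ⟨⟨a, d⟩, hd, rfl⟩
      refine ⟨length_mkStr a d, ?_⟩
      show numRuns (mkStr a d) = k + 1
      rw [numRuns_mkStr]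
      have hd' : (Finset.univ.filter fun i => d i ≠ 0).card = k := hd
      omega
  rw [hset, Set.ncard_image_of_injective _ mkStr_injective, Set.ncard_coe_finset]
  have : F = (Finset.univ : Finset (Fin q)) ×ˢ
      (Finset.univ.filter fun d : Fin m → Fin q =>
        (Finset.univ.filter fun i => d i ≠ 0).card = k) := by
    rw [hF, ← Finset.filter_product_right, Finset.univ_product_univ]
  rw [this, Finset.card_product, Finset.card_univ, Fintype.card_fin, card_weight m k q,
    mul_assoc]
end

section
/- Let q ≥ 2, let n ≥ 1, and let ε be a real number with ε ≥ 0. The number of q-ary strings x of length n whose number of runs is at most ((q-1)/q - ε)(n-1) + 1 is at most q^n · exp(-2(n-1)ε²) (as an inequality between real numbers). -/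
open Real

lemma hoeff_bern (p : ℝ) (hp0 : 0 ≤ p) (hp1 : p ≤ 1) (t : ℝ) (ht : 0 ≤ t) :
    1 - p + p * exp (-t) ≤ exp (-(t * p) + t ^ 2 / 8) := by
  set D : ℝ → ℝ := fun s => 1 - p + p * exp (-s) with hDdef
  have hD : ∀ s, 0 < D s := by
    intro s
    rcases eq_or_lt_of_le hp0 with h | h
    · simp [hDdef, ← h]
    · have : 0 < p * exp (-s) := by positivity
      have : 0 ≤ 1 - p := by linarith
      simp only [hDdef]
      nlinarith [exp_pos (-s)]
  set F : ℝ → ℝ := fun s => s ^ 2 / 8 - p * s - log (D s) with hFdef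
  set F' : ℝ → ℝ := fun s => s / 4 - p + p * exp (-s) / D s with hF'def
  have hDd : ∀ s, HasDerivAt D (-(p * exp (-s))) s := by
    intro s
    have h1 : HasDerivAt (fun s : ℝ => exp (-s)) (-exp (-s)) s := by
      simpa using ((hasDerivAt_neg s).exp)
    have := ((h1.const_mul p).const_add (1 - p))
    refine this.congr_deriv ?_
    ring
  have hF : ∀ s, HasDerivAt F (F' s) s := by
    intro s
    have h2 : HasDerivAt (fun s : ℝ => log (D s)) (-(p * exp (-s)) / D s) s :=
      (hDd s).log (hD s).ne'
    have h3 : HasDerivAt (fun s : ℝ => s ^ 2 / 8 - p * s) (s / 4 - p) s := by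
      have := ((hasDerivAt_pow 2 s).div_const 8).sub ((hasDerivAt_id s).const_mul p)
      refine this.congr_deriv ?_
      ring
    have := h3.sub h2
    refine this.congr_deriv ?_
    simp only [hF'def]
    field_simp
    ring
  have hF' : ∀ s, HasDerivAt F' (1 / 4 - (1 - p) * (p * exp (-s)) / (D s) ^ 2) s := by
    intro s
    have h1 : HasDerivAt (fun s : ℝ => p * exp (-s)) (-(p * exp (-s))) s := by
      have h1 : HasDerivAt (fun s : ℝ => exp (-s)) (-exp (-s)) s := by
        simpa using ((hasDerivAt_neg s).exp)
      refine (h1.const_mul p).congr_deriv ?_; ring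
    have h2 : HasDerivAt (fun s : ℝ => p * exp (-s) / D s)
        ((-(p * exp (-s)) * D s - p * exp (-s) * -(p * exp (-s))) / (D s) ^ 2) s :=
      h1.div (hDd s) (hD s).ne'
    have h3 : HasDerivAt (fun s : ℝ => s / 4 - p) (1 / 4) s := by
      have := (hasDerivAt_id s).div_const 4
      simpa using this.sub_const p
    have := h3.add h2
    refine this.congr_deriv ?_
    have hDs := (hD s).ne'
    simp only [hDdef] at hDs ⊢
    field_simp
    ring
  have hF'nonneg : ∀ s, 0 ≤ 1 / 4 - (1 - p) * (p * exp (-s)) / (D s) ^ 2 := by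
    intro s
    rw [sub_nonneg, div_le_iff₀ (pow_pos (hD s) 2)]
    have : (D s) ^ 2 - 4 * ((1 - p) * (p * exp (-s))) = ((1 - p) - p * exp (-s)) ^ 2 := by
      simp only [hDdef]; ring
    nlinarith [sq_nonneg ((1 - p) - p * exp (-s))]
  have hmono : Monotone F' := by
    apply monotone_of_deriv_nonneg
    · intro s; exact (hF' s).differentiableAt
    · intro s; rw [(hF' s).deriv]; exact hF'nonneg s
  have hF'0 : F' 0 = 0 := by
    simp only [hF'def, hDdef]
    norm_num
  have hF'pos : ∀ s, 0 ≤ s → 0 ≤ F' s := by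
    intro s hs
    rw [← hF'0]; exact hmono hs
  have hFmono : MonotoneOn F (Set.Ici 0) := by
    apply monotoneOn_of_deriv_nonneg (convex_Ici 0)
    · exact Continuous.continuousOn (by
        have : Differentiable ℝ F := fun s => (hF s).differentiableAt
        exact this.continuous)
    · intro s hs; exact (hF s).differentiableAt.differentiableWithinAt
    · intro s hs
      rw [(hF s).deriv]
      exact hF'pos s (le_of_lt (by simpa using hs))
  have hF0 : F 0 = 0 := by simp [hFdef, hDdef]
  have hFt : 0 ≤ F t := by
    rw [← hF0]
    exact hFmono Set.self_mem_Ici (Set.mem_Ici.mpr ht) ht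
  have hlog : log (D t) ≤ -(t * p) + t ^ 2 / 8 := by
    simp only [hFdef] at hFt
    linarith
  have := (log_le_iff_le_exp (hD t)).mp hlog
  simpa [hDdef] using this

lemma sum_pow_filter_card (k N : ℕ) (z : ℝ) :
    ∑ d : Fin N → Fin (k+1), z ^ ((Finset.univ.filter fun i => d i ≠ 0).card)
      = (1 + k * z) ^ N := by
  classical
  have h1 : ∀ d : Fin N → Fin (k+1), z ^ ((Finset.univ.filter fun i => d i ≠ 0).card)
      = ∏ i : Fin N, (if d i ≠ 0 then z else 1) := by
    intro d
    rw [Finset.prod_ite, Finset.prod_const, Finset.prod_const_one, mul_one]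
  simp_rw [h1]
  rw [← Fintype.sum_pow (fun c : Fin (k+1) => if c ≠ 0 then z else 1) N]
  congr 1
  rw [Finset.sum_eq_sum_sdiff_singleton_add (Finset.mem_univ (0 : Fin (k+1)))]
  have h2 : ∀ c ∈ Finset.univ \ {(0 : Fin (k+1))}, (if c ≠ 0 then z else 1) = z := by
    intro c hc
    simp only [Finset.mem_sdiff, Finset.mem_singleton] at hc
    simp [hc.2]
  rw [Finset.sum_congr rfl h2, Finset.sum_const]
  have h3 : (Finset.univ \ {(0 : Fin (k+1))}).card = k := by
    rw [Finset.card_sdiff_of_subset (by simp)]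
    simp
  rw [h3]
  simp
  ring

/-- for q ≥ 2, n ≥ 1 and ε ≥ 0, the number of q-ary strings of length n
with at most ((q-1)/q - ε)(n-1) + 1 runs is at most q^n · exp(-2(n-1)ε²). -/
theorem stmt_11 (q n : ℕ) (hq : 2 ≤ q) (hn : 1 ≤ n) (ε : ℝ) (hε : 0 ≤ ε) :
    ({x : List (Fin q) | x.length = n ∧
        (numRuns x : ℝ) ≤ (((q : ℝ) - 1) / q - ε) * ((n : ℝ) - 1) + 1}.ncard : ℝ) ≤
      (q : ℝ) ^ n * Real.exp (-2 * ((n : ℝ) - 1) * ε ^ 2) := by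
  classical
  obtain ⟨k, rfl⟩ : ∃ k, q = k + 1 := ⟨q - 1, by omega⟩
  have hk : 1 ≤ k := by omega
  set N := n - 1 with hNdef
  have hNn : N + 1 = n := by omega
  have hNr : ((n : ℝ) - 1) = (N : ℝ) := by
    rw [← hNn]; push_cast; ring
  set p : ℝ := (k : ℝ) / (k + 1) with hpdef
  have hkpos : (0 : ℝ) < (k : ℝ) + 1 := by positivity
  have hp0 : 0 ≤ p := by positivity
  have hp1 : p ≤ 1 := by
    rw [hpdef, div_le_one hkpos]; linarith
  have hpq : (((k + 1 : ℕ) : ℝ) - 1) / ((k + 1 : ℕ) : ℝ) = p := by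
    rw [hpdef]; push_cast; ring_nf
  set t : ℝ := 4 * ε with htdef
  have ht : 0 ≤ t := by positivity
  set z : ℝ := exp (-t) with hzdef
  have hz0 : 0 < z := exp_pos _
  set m : ℝ := (p - ε) * (N : ℝ) with hmdef
  set B : (Fin N → Fin (k+1)) → ℕ := fun d => (Finset.univ.filter fun i => d i ≠ 0).card
    with hBdef
  set T : Set (Fin (k+1) × (Fin N → Fin (k+1))) := {cd | (B cd.2 : ℝ) ≤ m} with hTdef
  set S : Set (List (Fin (k+1))) := {x | x.length = n ∧
      (numRuns x : ℝ) ≤ ((((k+1 : ℕ) : ℝ) - 1) / ((k+1 : ℕ) : ℝ) - ε) * ((n : ℝ) - 1) + 1}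
    with hSdef
  -- the encoding map
  set Φ : List (Fin (k+1)) → Fin (k+1) × (Fin N → Fin (k+1)) :=
    fun x => (x.getD 0 0, fun i => x.getD (i+1) 0 - x.getD i 0) with hΦdef
  -- break-count equality
  have hcard : ∀ x : List (Fin (k+1)), x.length = n →
      ((Finset.range (x.length - 1)).filter fun i => x[i]? ≠ x[i + 1]?).card
        = B (Φ x).2 := by
    intro x hx
    apply Finset.card_bij (fun a ha => (⟨a, by simp [hx] at ha; exact ha.1⟩ : Fin N))
    · intro a ha
      simp only [Finset.mem_filter, Finset.mem_range, hx] at ha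
      obtain ⟨ha1, ha2⟩ := ha
      have h1 : a < x.length := by omega
      have h2 : a + 1 < x.length := by omega
      simp only [Finset.mem_filter, Finset.mem_univ, true_and, hΦdef]
      rw [List.getElem?_eq_getElem h1, List.getElem?_eq_getElem h2] at ha2
      rw [Ne, sub_eq_zero]
      rw [List.getD_eq_getElem x 0 h2, List.getD_eq_getElem x 0 h1]
      simpa [eq_comm] using ha2
    · intro a ha b hb h
      simpa using congrArg Fin.val h
    · intro b hb
      simp only [Finset.mem_filter, Finset.mem_univ, true_and, hΦdef] at hb
      have hbN : (b : ℕ) < N := b.2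
      have h1 : (b : ℕ) < x.length := by omega
      have h2 : (b : ℕ) + 1 < x.length := by omega
      refine ⟨b, ?_, by simp⟩
      simp only [Finset.mem_filter, Finset.mem_range, hx]
      refine ⟨hbN, ?_⟩
      rw [List.getElem?_eq_getElem h1, List.getElem?_eq_getElem h2]
      rw [Ne, sub_eq_zero] at hb
      rw [List.getD_eq_getElem x 0 h2, List.getD_eq_getElem x 0 h1] at hb
      simpa [eq_comm] using hb
  -- S maps into T
  have hmaps : ∀ x ∈ S, Φ x ∈ T := by
    intro x hx
    obtain ⟨hlen, hcond⟩ := hx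
    rw [numRuns] at hcond
    rw [hcard x hlen] at hcond
    push_cast at hcond
    simp only [hTdef, Set.mem_setOf_eq, hmdef]
    have hpq' : ((k : ℝ) + 1 - 1) / ((k : ℝ) + 1) = p := by rw [hpdef]; norm_num
    rw [hpq', hNr] at hcond
    linarith
  -- injectivity
  have hinj : Set.InjOn Φ S := by
    intro x hx y hy hxy
    have hlx : x.length = n := hx.1
    have hly : y.length = n := hy.1
    have h0 : x.getD 0 0 = y.getD 0 0 := congrArg Prod.fst hxy
    have hd : ∀ i : Fin N, (x.getD (i+1) 0 - x.getD i 0 : Fin (k+1))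
        = y.getD (i+1) 0 - y.getD i 0 := fun i => congrFun (congrArg Prod.snd hxy) i
    have key : ∀ j, j < n → x.getD j 0 = y.getD j 0 := by
      intro j
      induction j with
      | zero => intro _; exact h0
      | succ j ih =>
        intro hj
        have hjN : j < N := by omega
        have hdj := hd ⟨j, hjN⟩
        simp only at hdj
        rw [ih (by omega)] at hdj
        exact sub_left_injective hdj
    apply List.ext_getElem (by rw [hlx, hly])
    intro i h1 h2
    rw [← List.getD_eq_getElem x 0 h1, ← List.getD_eq_getElem y 0 h2]
    exact key i (by omega)
  -- cardinality comparison
  have hTfin : T.Finite := Set.toFinite T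
  have hST : S.ncard ≤ T.ncard := Set.ncard_le_ncard_of_injOn Φ hmaps hinj hTfin
  -- bound T.ncard by the exponential sum
  have hTsum : (T.ncard : ℝ) ≤ ∑ cd : Fin (k+1) × (Fin N → Fin (k+1)),
      exp (t * m) * z ^ (B cd.2) := by
    rw [Set.ncard_eq_toFinset_card' T]
    push_cast
    calc (T.toFinset.card : ℝ) = ∑ _cd ∈ T.toFinset, (1 : ℝ) := by simp
      _ ≤ ∑ cd ∈ T.toFinset, exp (t * m) * z ^ (B cd.2) := by
          apply Finset.sum_le_sum
          intro cd hcd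
          rw [Set.mem_toFinset, hTdef, Set.mem_setOf_eq] at hcd
          rw [hzdef, ← Real.exp_nat_mul, ← Real.exp_add]
          rw [show (1 : ℝ) = exp 0 by simp]
          apply Real.exp_le_exp.mpr
          have : (0 : ℝ) ≤ t * (m - B cd.2) := mul_nonneg ht (by linarith)
          nlinarith [this]
      _ ≤ ∑ cd : Fin (k+1) × (Fin N → Fin (k+1)), exp (t * m) * z ^ (B cd.2) := by
          apply Finset.sum_le_sum_of_subset_of_nonneg (Finset.subset_univ _)
          intro cd _ _
          positivity
  -- compute the sum
  have hsum : ∑ cd : Fin (k+1) × (Fin N → Fin (k+1)), exp (t * m) * z ^ (B cd.2)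
      = exp (t * m) * ((k + 1 : ℝ) * (1 + k * z) ^ N) := by
    rw [← Finset.mul_sum]
    congr 1
    rw [Fintype.sum_prod_type]
    simp only [hBdef]
    rw [Finset.sum_congr rfl (fun c _ => sum_pow_filter_card k N z)]
    rw [Finset.sum_const, Finset.card_univ, Fintype.card_fin, nsmul_eq_mul]
    push_cast
    ring
  -- final bound
  have hkey : 1 + (k : ℝ) * z ≤ ((k : ℝ) + 1) * exp (-(t * p) + t ^ 2 / 8) := by
    have := hoeff_bern p hp0 hp1 t ht
    have h1p : 1 - p = 1 / ((k : ℝ) + 1) := by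
      rw [hpdef]; field_simp
      ring
    have : 1 + (k : ℝ) * z = ((k : ℝ) + 1) * (1 - p + p * exp (-t)) := by
      rw [h1p, hpdef, hzdef]; field_simp
    rw [this]
    apply mul_le_mul_of_nonneg_left _ (le_of_lt hkpos)
    exact hoeff_bern p hp0 hp1 t ht
  have hpow : (1 + (k : ℝ) * z) ^ N ≤ (((k : ℝ) + 1) * exp (-(t * p) + t ^ 2 / 8)) ^ N := by
    apply pow_le_pow_left₀ _ hkey
    positivity
  calc (S.ncard : ℝ) ≤ (T.ncard : ℝ) := by exact_mod_cast hST
    _ ≤ ∑ cd : Fin (k+1) × (Fin N → Fin (k+1)), exp (t * m) * z ^ (B cd.2) := hTsum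
    _ = exp (t * m) * ((k + 1 : ℝ) * (1 + k * z) ^ N) := hsum
    _ ≤ exp (t * m) * ((k + 1 : ℝ) * ((((k : ℝ) + 1) * exp (-(t * p) + t ^ 2 / 8)) ^ N)) := by
        apply mul_le_mul_of_nonneg_left _ (le_of_lt (exp_pos _))
        apply mul_le_mul_of_nonneg_left hpow (le_of_lt hkpos)
    _ = ((k : ℝ) + 1) ^ n * (exp (t * m) * exp (-(t * p) + t ^ 2 / 8) ^ N) := by
        rw [mul_pow, ← hNn]
        push_cast
        ring
    _ = (((k + 1 : ℕ) : ℝ)) ^ n * exp (-2 * ((n : ℝ) - 1) * ε ^ 2) := by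
        congr 1
        · push_cast; ring
        · rw [← Real.exp_nat_mul, ← Real.exp_add, hNr]
          congr 1
          rw [hmdef, htdef]
          ring
end

section
/- Let q ≥ 1 and s ≥ q be natural numbers and set b* = ⌈(s - q)/(q + 1)⌉. Then for every natural number b ≤ s, q^{b*} · C(s, b) ≤ q^b · C(s, b*); that is, the quantity q^b / C(s, b) over b ∈ {0, 1, …, s} is minimized at b = b*. -/
/-- for q ≥ 1, s ≥ q and b* = ⌈(s - q)/(q + 1)⌉, for every b ≤ s we have
q^{b*} · C(s, b) ≤ q^b · C(s, b*), i.e. q^b / C(s, b) over b ∈ {0, …, s} is minimized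
at b = b*. -/
theorem stmt_15 (q s : ℕ) (hq : 1 ≤ q) (hs : q ≤ s) :
    ∀ b ≤ s,
      q ^ (⌈((s : ℚ) - q) / ((q : ℚ) + 1)⌉₊) * s.choose b ≤
        q ^ b * s.choose (⌈((s : ℚ) - q) / ((q : ℚ) + 1)⌉₊) := by
  set c := ⌈((s : ℚ) - q) / ((q : ℚ) + 1)⌉₊ with hcdef
  have hqpos : (0:ℚ) < (q:ℚ) + 1 := by positivity
  -- hc1 : s ≤ c*(q+1) + q
  have hc1 : s ≤ c * (q + 1) + q := by
    have h := Nat.le_ceil (((s : ℚ) - q) / ((q : ℚ) + 1))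
    rw [div_le_iff₀ hqpos] at h
    have : (s:ℚ) ≤ (c:ℚ) * ((q:ℚ) + 1) + q := by linarith
    exact_mod_cast this
  -- hc2 : c*(q+1) ≤ s
  have hc2 : c * (q + 1) ≤ s := by
    have hnn : (0:ℚ) ≤ ((s : ℚ) - q) / ((q : ℚ) + 1) := by
      apply div_nonneg _ (le_of_lt hqpos)
      have : (q:ℚ) ≤ s := by exact_mod_cast hs
      linarith
    have h := Nat.ceil_lt_add_one hnn
    rw [← hcdef] at h
    have h2 : ((c:ℚ)) * ((q:ℚ) + 1) < ((s:ℚ) - q) + ((q:ℚ)+1) := by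
      have := (lt_div_iff₀ hqpos).mp (by linarith : (c:ℚ) - 1 < ((s:ℚ) - q) / ((q:ℚ)+1))
      linarith
    have h3 : (c:ℚ) * ((q:ℚ) + 1) < (s:ℚ) + 1 := by linarith
    have h4 : c * (q+1) < s + 1 := by exact_mod_cast h3
    omega
  have hcs : c ≤ s := le_trans (Nat.le_mul_of_pos_right c (by omega)) hc2
  have hch : ∀ b : ℕ, s.choose (b+1) * (b+1) = s.choose b * (s - b) :=
    fun b => Nat.choose_succ_right_eq s b
  -- step down
  have stepdown : ∀ b : ℕ, b + 1 ≤ c → q * s.choose b ≤ s.choose (b+1) := by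
    intro b hb
    have h3 : (b+1) * (q+1) ≤ s := le_trans (Nat.mul_le_mul_right _ hb) hc2
    have hkey : q * (b+1) ≤ s - b := by
      have he : (b+1) * (q+1) = q * (b+1) + (b+1) := by ring
      rw [he] at h3
      omega
    have : q * s.choose b * (b+1) ≤ s.choose (b+1) * (b+1) := by
      rw [hch b]
      calc q * s.choose b * (b+1) = s.choose b * (q * (b+1)) := by ring
        _ ≤ s.choose b * (s - b) := Nat.mul_le_mul_left _ hkey
    exact Nat.le_of_mul_le_mul_right this (by omega)
  -- step up
  have stepup : ∀ b : ℕ, c ≤ b → s.choose (b+1) ≤ q * s.choose b := by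
    intro b hb
    have h3 : c * (q+1) ≤ b * (q+1) := Nat.mul_le_mul_right _ hb
    have hkey : s - b ≤ q * (b+1) := by
      have he : b * (q+1) + q = q * (b+1) + b := by ring
      omega
    have : s.choose (b+1) * (b+1) ≤ q * s.choose b * (b+1) := by
      rw [hch b]
      calc s.choose b * (s - b) ≤ s.choose b * (q * (b+1)) := Nat.mul_le_mul_left _ hkey
        _ = q * s.choose b * (b+1) := by ring
    exact Nat.le_of_mul_le_mul_right this (by omega)
  -- increasing part
  have partB : ∀ b : ℕ, c ≤ b → q ^ c * s.choose b ≤ q ^ b * s.choose c := by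
    intro b hb
    induction b, hb using Nat.le_induction with
    | base => exact le_refl _
    | succ n hn ih =>
      calc q ^ c * s.choose (n+1) ≤ q ^ c * (q * s.choose n) :=
            Nat.mul_le_mul_left _ (stepup n hn)
        _ = q * (q ^ c * s.choose n) := by ring
        _ ≤ q * (q ^ n * s.choose c) := Nat.mul_le_mul_left _ ih
        _ = q ^ (n+1) * s.choose c := by ring
  -- decreasing part
  have partA : ∀ k : ℕ, k ≤ c → q ^ c * s.choose (c - k) ≤ q ^ (c - k) * s.choose c := by
    intro k
    induction k with
    | zero => simp
    | succ k ih =>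
      intro hk
      have hk' : k ≤ c := by omega
      have hsucc : c - k = (c - (k+1)) + 1 := by omega
      have h1 : q * (q ^ c * s.choose (c - (k+1))) ≤ q ^ c * s.choose (c - k) := by
        rw [hsucc]
        calc q * (q ^ c * s.choose (c - (k+1)))
            = q ^ c * (q * s.choose (c - (k+1))) := by ring
          _ ≤ q ^ c * s.choose ((c - (k+1)) + 1) :=
              Nat.mul_le_mul_left _ (stepdown _ (by omega))
      have h2 : q ^ c * s.choose (c - k) ≤ q ^ (c - k) * s.choose c := ih hk'
      have h3 : q ^ (c - k) * s.choose c = q * (q ^ (c - (k+1)) * s.choose c) := by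
        rw [hsucc, pow_succ]; ring
      have : q * (q ^ c * s.choose (c - (k+1))) ≤ q * (q ^ (c - (k+1)) * s.choose c) := by
        rw [← h3]; exact le_trans h1 h2
      exact Nat.le_of_mul_le_mul_left this (by omega)
  intro b hb
  rcases le_or_gt c b with h | h
  · exact partB b h
  · have := partA (c - b) (by omega)
    have hb' : c - (c - b) = b := by omega
    rwa [hb'] at this
end

section
/- Fix natural numbers q ≥ 2 and s. Then the limit inferior as l → ∞ of the ratio (∑_{(c_0,…,c_s) ∈ M(s+1, l, 2)} ∏_{i=0}^{s} (q^{c_i} - q(q-1))) / (q^l · C(l, s)) is at least 1. -/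
open Finset Filter

lemma mem_compSet {t l k : ℕ} {c : Fin t → ℕ} :
    c ∈ compSet t l k ↔ (∑ i, c i = l) ∧ ∀ i, k ≤ c i := by
  simp [compSet, Finset.Nat.mem_antidiagonalTuple]

lemma compSet_eq_empty {t l k : ℕ} (h : l < t * k) : compSet t l k = ∅ := by
  ext c
  simp only [mem_compSet, Finset.notMem_empty, iff_false, not_and]
  intro hsum hk
  have h2 : t * k ≤ ∑ i, c i := by
    calc t * k = ∑ _i : Fin t, k := by simp [mul_comm]
    _ ≤ ∑ i, c i := Finset.sum_le_sum fun i _ => hk i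
  omega

lemma compSet_succ (t l k : ℕ) :
    compSet (t+1) l k =
      (Finset.Icc k l).biUnion fun a => (compSet t (l - a) k).image (Fin.cons a) := by
  ext c
  simp only [mem_compSet, Finset.mem_biUnion, Finset.mem_Icc, Finset.mem_image]
  constructor
  · rintro ⟨hsum, hk⟩
    have hs := Fin.sum_univ_succ c
    refine ⟨c 0, ⟨hk 0, by omega⟩, Fin.tail c, ⟨?_, fun i => hk i.succ⟩, Fin.cons_self_tail c⟩
    have : ∑ i : Fin t, Fin.tail c i = ∑ i : Fin t, c i.succ := rfl
    omega
  · rintro ⟨a, ⟨hka, hal⟩, c', ⟨hsum', hk'⟩, rfl⟩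
    have hs := Fin.sum_univ_succ (Fin.cons a c' : Fin (t+1) → ℕ)
    simp only [Fin.cons_zero, Fin.cons_succ] at hs
    constructor
    · omega
    · intro i
      refine Fin.cases ?_ ?_ i
      · simpa using hka
      · intro j; simpa using hk' j

lemma card_compSet (t k : ℕ) : ∀ n, (compSet (t+1) ((t+1) * k + n) k).card = (n + t).choose t := by
  induction t with
  | zero =>
    intro n
    have h1 : compSet 1 (1 * k + n) k = {![k + n]} := by
      ext c
      simp only [mem_compSet, Finset.mem_singleton, Fin.sum_univ_one]
      constructor
      · rintro ⟨hsum, hk⟩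
        funext i
        have hi : i = 0 := Subsingleton.elim _ _
        subst hi
        show c 0 = k + n
        omega
      · rintro rfl
        refine ⟨by simp, fun i => ?_⟩
        have hi : i = 0 := Subsingleton.elim _ _
        subst hi
        show k ≤ k + n
        omega
    rw [h1]
    simp
  | succ t ih =>
    intro n
    set l := (t + 2) * k + n with hl
    have e1 : (t + 2) * k = (t + 1) * k + k := by ring
    rw [compSet_succ, Finset.card_biUnion]
    · have himg : ∀ a : ℕ, ((compSet (t+1) (l - a) k).image
            (Fin.cons (α := fun _ : Fin (t+2) => ℕ) a)).card
          = (compSet (t+1) (l - a) k).card := fun a =>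
        Finset.card_image_of_injective _
          (Fin.cons_right_injective (α := fun _ : Fin (t+2) => ℕ) a)
      simp only [himg]
      have hsplit : Finset.Icc k l = Finset.Icc k (k + n) ∪ Finset.Icc (k + n + 1) l := by
        ext x; simp only [Finset.mem_Icc, Finset.mem_union]; omega
      rw [hsplit, Finset.sum_union (by
        rw [Finset.disjoint_left]; intro x hx hx'
        simp only [Finset.mem_Icc] at hx hx'; omega)]
      have h2 : ∑ a ∈ Finset.Icc (k + n + 1) l, (compSet (t+1) (l - a) k).card = 0 := by
        refine Finset.sum_eq_zero fun a ha => ?_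
        simp only [Finset.mem_Icc] at ha
        rw [compSet_eq_empty (by omega)]
        simp
      rw [h2, add_zero]
      have h3 : ∀ a ∈ Finset.Icc k (k + n), (compSet (t+1) (l - a) k).card
          = (k + n - a + t).choose t := by
        intro a ha
        simp only [Finset.mem_Icc] at ha
        have : l - a = (t + 1) * k + (k + n - a) := by omega
        rw [this, ih]
      rw [Finset.sum_congr rfl h3]
      have h4 : ∑ a ∈ Finset.Icc k (k + n), (k + n - a + t).choose t
          = ∑ m ∈ Finset.Icc t (n + t), m.choose t := by
        refine Finset.sum_nbij' (fun a => k + n - a + t) (fun m => k + n + t - m) ?_ ?_ ?_ ?_ ?_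
        · intro a ha; simp only [Finset.mem_Icc] at *; omega
        · intro m hm; simp only [Finset.mem_Icc] at *; omega
        · intro a ha; simp only [Finset.mem_Icc] at ha; omega
        · intro m hm; simp only [Finset.mem_Icc] at hm; omega
        · intro a ha; rfl
      have e2 : n + (t + 1) = n + t + 1 := by omega
      rw [h4, Nat.sum_Icc_choose, e2]
    · intro a ha b hb hab
      rw [Function.onFun, Finset.disjoint_left]
      rintro x hx hx'
      simp only [Finset.mem_image] at hx hx'
      obtain ⟨c1, _, rfl⟩ := hx
      obtain ⟨c2, _, h⟩ := hx'
      apply hab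
      have h0 := congrFun h 0
      simpa using h0.symm

lemma card_compSet_of_le (s k l : ℕ) (h : (s+1) * k ≤ l) :
    (compSet (s+1) l k).card = (l - (s+1)*k + s).choose s := by
  obtain ⟨n, rfl⟩ := Nat.exists_eq_add_of_le h
  rw [card_compSet]
  congr 1
  omega

lemma tendsto_sub_div_sub (a b : ℝ) :
    Tendsto (fun x : ℝ => (x - a) / (x - b)) atTop (nhds 1) := by
  have h1 : Tendsto (fun x : ℝ => x - b) atTop atTop :=
    tendsto_atTop_add_const_right _ (-b) tendsto_id
  have h2 : Tendsto (fun x : ℝ => (a - b) / (x - b)) atTop (nhds 0) :=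
    Tendsto.div_atTop tendsto_const_nhds h1
  have h3 : Tendsto (fun x : ℝ => 1 - (a - b) / (x - b)) atTop (nhds (1 - 0)) :=
    tendsto_const_nhds.sub h2
  rw [sub_zero] at h3
  refine h3.congr' ?_
  filter_upwards [eventually_gt_atTop b] with x hx
  have hxb : x - b ≠ 0 := by linarith
  field_simp
  ring

lemma tendsto_choose_ratio (s K : ℕ) :
    Tendsto (fun l : ℕ => ((l - K).choose s : ℝ) / (l.choose s)) atTop (nhds 1) := by
  have key : (fun l : ℕ => ((l - K).choose s : ℝ) / (l.choose s))
      =ᶠ[atTop] fun l => ∏ j ∈ Finset.range s, (((l : ℝ) - (K + j)) / ((l : ℝ) - j)) := by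
    filter_upwards [eventually_ge_atTop (K + s)] with l hl
    have h1 : ((l - K).choose s : ℝ) * (s.factorial : ℝ) = ∏ j ∈ Finset.range s, ((l : ℝ) - (K + j)) := by
      have := Nat.descFactorial_eq_factorial_mul_choose (l - K) s
      have h2 := Nat.descFactorial_eq_prod_range (l - K) s
      have h3 : ((l - K).descFactorial s : ℝ) = ∏ j ∈ Finset.range s, ((l : ℝ) - (K + j)) := by
        rw [h2]
        push_cast
        refine Finset.prod_congr rfl fun j hj => ?_
        simp only [Finset.mem_range] at hj
        have : K + j ≤ l := by omega
        push_cast [Nat.cast_sub (by omega : j ≤ l - K), Nat.cast_sub (by omega : K ≤ l)]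
        ring
      rw [← h3, this]
      push_cast
      ring
    have h4 : ((l.choose s : ℝ)) * (s.factorial : ℝ) = ∏ j ∈ Finset.range s, ((l : ℝ) - j) := by
      have := Nat.descFactorial_eq_factorial_mul_choose l s
      have h2 := Nat.descFactorial_eq_prod_range l s
      have h3 : ((l.descFactorial s : ℝ)) = ∏ j ∈ Finset.range s, ((l : ℝ) - j) := by
        rw [h2]
        push_cast
        refine Finset.prod_congr rfl fun j hj => ?_
        simp only [Finset.mem_range] at hj
        push_cast [Nat.cast_sub (by omega : j ≤ l)]
        ring
      rw [← h3, this]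
      push_cast
      ring
    have hfac : (s.factorial : ℝ) ≠ 0 := by positivity
    have hden : (l.choose s : ℝ) ≠ 0 := by
      have : 0 < l.choose s := Nat.choose_pos (by omega)
      positivity
    rw [Finset.prod_div_distrib, ← h1, ← h4, mul_div_mul_right _ _ hfac]
  have hprod : Tendsto (fun l : ℕ => ∏ j ∈ Finset.range s, (((l : ℝ) - (K + j)) / ((l : ℝ) - j)))
      atTop (nhds 1) := by
    have : Tendsto (fun l : ℕ => ∏ j ∈ Finset.range s, (((l : ℝ) - (K + j)) / ((l : ℝ) - j)))
        atTop (nhds (∏ _j ∈ Finset.range s, (1 : ℝ))) := by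
      refine tendsto_finset_prod _ fun j _ => ?_
      exact (tendsto_sub_div_sub (K + j) j).comp tendsto_natCast_atTop_atTop
    simpa using this
  exact hprod.congr' key.symm

lemma sum_upper (q s l : ℕ) (hq : 2 ≤ q) :
    (∑ c ∈ compSet (s + 1) l 2, ∏ i, (q ^ c i - q * (q - 1)))
      ≤ l.choose s * q ^ l := by
  have h1 : ∀ c ∈ compSet (s + 1) l 2, (∏ i, (q ^ c i - q * (q - 1))) ≤ q ^ l := by
    intro c hc
    rw [mem_compSet] at hc
    calc ∏ i, (q ^ c i - q * (q - 1)) ≤ ∏ i, q ^ c i :=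
          Finset.prod_le_prod' fun i _ => Nat.sub_le _ _
      _ = q ^ l := by rw [Finset.prod_pow_eq_pow_sum, hc.1]
  calc (∑ c ∈ compSet (s + 1) l 2, ∏ i, (q ^ c i - q * (q - 1)))
      ≤ ∑ _c ∈ compSet (s + 1) l 2, q ^ l := Finset.sum_le_sum h1
    _ = (compSet (s + 1) l 2).card * q ^ l := by rw [Finset.sum_const, smul_eq_mul]
    _ ≤ l.choose s * q ^ l := by
        refine Nat.mul_le_mul_right _ ?_
        rcases le_or_gt ((s+1) * 2) l with h | h
        · rw [card_compSet_of_le s 2 l h]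
          exact Nat.choose_le_choose s (by omega)
        · rw [compSet_eq_empty h]
          simp
  
lemma sum_lower (q s m l : ℕ) (hq : 2 ≤ q) (hm : 2 ≤ m) (hl : (s+1) * m ≤ l) :
    ((l - (s+1)*m + s).choose s : ℝ) * (q:ℝ)^l * (1 - (q:ℝ) * ((q:ℝ) - 1) / (q:ℝ)^m)^(s+1)
      ≤ ((∑ c ∈ compSet (s + 1) l 2, ∏ i, (q ^ c i - q * (q - 1)) : ℕ) : ℝ) := by
  set r : ℝ := 1 - (q:ℝ) * ((q:ℝ) - 1) / (q:ℝ)^m with hr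
  have hq1 : (1:ℝ) ≤ (q:ℝ) := by exact_mod_cast (by omega : 1 ≤ q)
  have hqm : (q:ℝ) * ((q:ℝ) - 1) ≤ (q:ℝ)^m := by
    calc (q:ℝ) * ((q:ℝ) - 1) ≤ (q:ℝ) * (q:ℝ) := by nlinarith
      _ = (q:ℝ)^2 := by ring
      _ ≤ (q:ℝ)^m := pow_le_pow_right₀ hq1 hm
  have hr0 : 0 ≤ r := by
    rw [hr, sub_nonneg, div_le_one (by positivity)]
    exact hqm
  have hsub : compSet (s+1) l m ⊆ compSet (s+1) l 2 := by
    intro c hc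
    rw [mem_compSet] at *
    exact ⟨hc.1, fun i => le_trans hm (hc.2 i)⟩
  have hterm : ∀ c ∈ compSet (s+1) l m,
      (q:ℝ)^l * r^(s+1) ≤ ((∏ i, (q ^ c i - q * (q - 1)) : ℕ) : ℝ) := by
    intro c hc
    rw [mem_compSet] at hc
    have hcast : ((∏ i, (q ^ c i - q * (q - 1)) : ℕ) : ℝ)
        = ∏ i, ((q:ℝ) ^ c i - (q:ℝ) * ((q:ℝ) - 1)) := by
      push_cast
      refine Finset.prod_congr rfl fun i _ => ?_
      have hle : q * (q - 1) ≤ q ^ c i := by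
        calc q * (q - 1) ≤ q * q := Nat.mul_le_mul_left _ (by omega)
          _ = q ^ 2 := (sq q).symm
          _ ≤ q ^ c i := Nat.pow_le_pow_right (by omega) (le_trans hm (hc.2 i))
      push_cast [Nat.cast_sub hle, Nat.cast_sub (by omega : 1 ≤ q)]
      ring
    rw [hcast]
    have hstep : ∀ i : Fin (s+1), (q:ℝ) ^ c i * r ≤ (q:ℝ) ^ c i - (q:ℝ) * ((q:ℝ) - 1) := by
      intro i
      have hge : (q:ℝ)^m ≤ (q:ℝ) ^ c i := pow_le_pow_right₀ hq1 (hc.2 i)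
      have h0 : (0:ℝ) < (q:ℝ)^m := by positivity
      rw [hr]
      have : (q:ℝ) ^ c i * ((q:ℝ) * ((q:ℝ) - 1) / (q:ℝ)^m) ≥ (q:ℝ) * ((q:ℝ) - 1) := by
        rw [ge_iff_le, mul_div_assoc']
        rw [le_div_iff₀ h0]
        nlinarith [mul_le_mul_of_nonneg_left hge (by nlinarith : (0:ℝ) ≤ (q:ℝ) * ((q:ℝ) - 1))]
      nlinarith
    calc (q:ℝ)^l * r^(s+1) = ∏ i : Fin (s+1), ((q:ℝ) ^ c i * r) := by
          rw [Finset.prod_mul_distrib, Finset.prod_pow_eq_pow_sum, hc.1, Finset.prod_const]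
          simp [Finset.card_univ]
      _ ≤ ∏ i, ((q:ℝ) ^ c i - (q:ℝ) * ((q:ℝ) - 1)) := by
          refine Finset.prod_le_prod (fun i _ => ?_) (fun i _ => hstep i)
          positivity
  calc ((l - (s+1)*m + s).choose s : ℝ) * (q:ℝ)^l * r^(s+1)
      = ∑ _c ∈ compSet (s+1) l m, (q:ℝ)^l * r^(s+1) := by
        rw [Finset.sum_const, card_compSet_of_le s m l hl, nsmul_eq_mul]
        ring
    _ ≤ ∑ c ∈ compSet (s+1) l m, ((∏ i, (q ^ c i - q * (q - 1)) : ℕ) : ℝ) :=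
        Finset.sum_le_sum hterm
    _ = ((∑ c ∈ compSet (s+1) l m, ∏ i, (q ^ c i - q * (q - 1)) : ℕ) : ℝ) := by push_cast; rfl
    _ ≤ ((∑ c ∈ compSet (s + 1) l 2, ∏ i, (q ^ c i - q * (q - 1)) : ℕ) : ℝ) := by
        exact_mod_cast Finset.sum_le_sum_of_subset hsub

/-- for fixed q ≥ 2 and s,
liminf_{l → ∞} (∑_{c ∈ M(s+1, l, 2)} ∏_{i=0}^{s} (q^{c_i} - q(q-1))) / (q^l · C(l, s)) ≥ 1. -/
theorem stmt_16 (q s : ℕ) (hq : 2 ≤ q) :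
    1 ≤ Filter.liminf
      (fun l : ℕ =>
        ((∑ c ∈ compSet (s + 1) l 2, ∏ i, (q ^ c i - q * (q - 1)) : ℕ) : ℝ) /
          ((q : ℝ) ^ l * l.choose s))
      Filter.atTop := by
  set u : ℕ → ℝ := fun l : ℕ =>
    ((∑ c ∈ compSet (s + 1) l 2, ∏ i, (q ^ c i - q * (q - 1)) : ℕ) : ℝ) /
      ((q : ℝ) ^ l * l.choose s) with hu
  have hq1 : (1:ℝ) ≤ (q:ℝ) := by exact_mod_cast (by omega : 1 ≤ q)
  have hu0 : ∀ l, 0 ≤ u l := fun l => div_nonneg (Nat.cast_nonneg _) (by positivity)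
  have hbdd : Filter.atTop.IsBoundedUnder (· ≥ ·) u := isBoundedUnder_of ⟨0, hu0⟩
  have key : ∀ m, 2 ≤ m →
      (1 - (q:ℝ) * ((q:ℝ) - 1) / (q:ℝ)^m)^(s+1) ≤ Filter.liminf u Filter.atTop := by
    intro m hm
    set r : ℝ := 1 - (q:ℝ) * ((q:ℝ) - 1) / (q:ℝ)^m with hr
    set K : ℕ := (s+1)*m - s with hK
    set v : ℕ → ℝ := fun l => (((l - K).choose s : ℝ) / (l.choose s)) * r^(s+1) with hv
    have hvt : Tendsto v atTop (nhds (r^(s+1))) := by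
      have h := (tendsto_choose_ratio s K).mul_const (r^(s+1))
      rw [one_mul] at h
      exact h
    have hle : ∀ᶠ l in atTop, v l ≤ u l := by
      filter_upwards [eventually_ge_atTop ((s+1)*m + s + 1)] with l hl'
      have hl : (s+1)*m ≤ l := by omega
      have hls : s < l := by nlinarith
      have hms : s ≤ (s+1)*m := by nlinarith
      have hKl : l - K = l - (s+1)*m + s := by omega
      have hD : (0:ℝ) < (q:ℝ)^l * (l.choose s : ℝ) := by
        have : 0 < l.choose s := Nat.choose_pos (le_of_lt hls)
        positivity
      have hlow := sum_lower q s m l hq hm hl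
      have hveq : v l = (((l - (s+1)*m + s).choose s : ℝ) * (q:ℝ)^l * r^(s+1))
          / ((q:ℝ)^l * (l.choose s : ℝ)) := by
        rw [hv]
        simp only [hKl]
        have hql : (q:ℝ)^l ≠ 0 := by positivity
        have hcl : (l.choose s : ℝ) ≠ 0 := by
          have : 0 < l.choose s := Nat.choose_pos (le_of_lt hls)
          positivity
        field_simp
      rw [hveq, hu]
      exact div_le_div_of_nonneg_right hlow hD.le
    have hup : ∀ l, u l ≤ 1 := by
      intro l
      rw [hu]
      refine div_le_one_of_le₀ ?_ (by positivity)
      calc ((∑ c ∈ compSet (s + 1) l 2, ∏ i, (q ^ c i - q * (q - 1)) : ℕ) : ℝ)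
          ≤ ((l.choose s * q ^ l : ℕ) : ℝ) := by exact_mod_cast sum_upper q s l hq
        _ = (q:ℝ)^l * l.choose s := by push_cast; ring
    have hcb : Filter.atTop.IsCoboundedUnder (· ≥ ·) u :=
      Filter.isCoboundedUnder_ge_of_eventually_le Filter.atTop
        (Filter.Eventually.of_forall hup)
    have hstep := Filter.liminf_le_liminf hle hvt.isBoundedUnder_ge hcb
    rwa [hvt.liminf_eq] at hstep
  have hg : Tendsto (fun m : ℕ => (1 - (q:ℝ) * ((q:ℝ) - 1) / (q:ℝ)^m)^(s+1))
      atTop (nhds 1) := by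
    have h0 : Tendsto (fun m : ℕ => (q:ℝ) * ((q:ℝ) - 1) / (q:ℝ)^m) atTop (nhds 0) := by
      have hpow : Tendsto (fun m : ℕ => ((q:ℝ)⁻¹)^m) atTop (nhds 0) := by
        refine tendsto_pow_atTop_nhds_zero_of_lt_one (by positivity) ?_
        rw [inv_lt_one_iff₀]
        right
        exact_mod_cast (by omega : 1 < q)
      have := hpow.const_mul ((q:ℝ) * ((q:ℝ) - 1))
      rw [mul_zero] at this
      refine this.congr fun m => ?_
      rw [div_eq_mul_inv, inv_pow]
    have h1 : Tendsto (fun m : ℕ => (1 - (q:ℝ) * ((q:ℝ) - 1) / (q:ℝ)^m)^(s+1))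
        atTop (nhds ((1 - 0:ℝ)^(s+1))) :=
      (((tendsto_const_nhds : Tendsto (fun _ : ℕ => (1:ℝ)) atTop (nhds 1)).sub h0).pow (s+1))
    simpa using h1
  have hfin := le_of_tendsto hg (Filter.eventually_atTop.mpr ⟨2, key⟩)
  exact hfin
end
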